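/- arXiv:2601.09409 — 2 statements merged into one kernel-verified Lean document; each statement's English description precedes it below -/
import Mathlib

section
/- Let R be a nontrivial commutative ring ((0 : R) ≠ 1) that is locally finite, i.e., for every finite subset s ⊆ R the subring of R generated by s is finite, and let Σ be an alphabet. Then RevL(R,Σ) equals the Boolean closure of RevL(𝔹,Σ): it is the smallest class of languages over Σ containing every language recognized by a reversible NFA over Σ and closed under finite union, finite intersection, and complement relative to List Σ. -/
open Matrix

namespace RevWA

/-- A weighted automaton over a semiring `S` and alphabet `α`, given by a linear
representation: number of states `n`, initial weight vector, transition matrices,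
and final weight vector. -/
structure WA (S : Type) [Semiring S] (α : Type) where
  n : ℕ
  init : Fin n → S
  trans : α → Matrix (Fin n) (Fin n) S
  final : Fin n → S

variable {S : Type} [Semiring S] {α : Type}

/-- The matrix associated to a word: product of the transition matrices of its letters. -/
def WA.matWord (A : WA S α) (w : List α) : Matrix (Fin A.n) (Fin A.n) S :=
  (w.map A.trans).prod

/-- The series realized by a weighted automaton: `i ⬝ μ(w) ⬝ f`. -/
def WA.series (A : WA S α) : List α → S :=
  fun w => A.init ⬝ᵥ (A.matWord w).mulVec A.final

/-- A matrix has at most one nonzero entry in each row. -/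
def rowOk {n : ℕ} (M : Matrix (Fin n) (Fin n) S) : Prop :=
  ∀ i j j', M i j ≠ 0 → M i j' ≠ 0 → j = j'

/-- A matrix has at most one nonzero entry in each column. -/
def colOk {n : ℕ} (M : Matrix (Fin n) (Fin n) S) : Prop :=
  ∀ i i' j, M i j ≠ 0 → M i' j ≠ 0 → i = i'

/-- A weighted automaton is reversible if each transition matrix has at most one
nonzero entry in each row and at most one nonzero entry in each column. -/
def WA.Reversible (A : WA S α) : Prop :=
  ∀ a : α, rowOk (A.trans a) ∧ colOk (A.trans a)

/-- A weighted automaton has exactly one initial state. -/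
def WA.OneInitial (A : WA S α) : Prop :=
  ∃! q : Fin A.n, A.init q ≠ 0

/-- `Rev S α`: series realized by reversible weighted automata over `S` and `α`. -/
def Rev (S : Type) [Semiring S] (α : Type) : Set (List α → S) :=
  {r | ∃ A : WA S α, A.Reversible ∧ A.series = r}

/-- `Rev₁ S α`: series realized by reversible weighted automata over `S` and `α`
with exactly one initial state. -/
def Rev1 (S : Type) [Semiring S] (α : Type) : Set (List α → S) :=
  {r | ∃ A : WA S α, A.Reversible ∧ A.OneInitial ∧ A.series = r}

/-- The support of a series. -/
def supp (r : List α → S) : Set (List α) :=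
  {w | r w ≠ 0}

/-- `RevL S α`: supports of series realized by reversible weighted automata. -/
def RevL (S : Type) [Semiring S] (α : Type) : Set (Set (List α)) :=
  {L | ∃ r ∈ Rev S α, supp r = L}

/-- `RevL₁ S α`: supports of series realized by reversible weighted automata with
exactly one initial state. -/
def RevL1 (S : Type) [Semiring S] (α : Type) : Set (Set (List α)) :=
  {L | ∃ r ∈ Rev1 S α, supp r = L}

/-- The characteristic series of a language `L` over `S`. -/
noncomputable def charSeries (S : Type) [Semiring S] {α : Type} (L : Set (List α)) :
    List α → S :=
  L.indicator 1

/-- A reversible nondeterministic finite automaton: deterministic and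
codeterministic transition relation. -/
structure RevNFA (α : Type) where
  Q : Type
  fintypeQ : Fintype Q
  δ : Q → α → Q → Prop
  I : Set Q
  F : Set Q
  det : ∀ p a q q', δ p a q → δ p a q' → q = q'
  codet : ∀ p p' a q, δ p a q → δ p' a q → p = p'

/-- Paths in a reversible NFA. -/
inductive RevNFA.Path {α : Type} (A : RevNFA α) : A.Q → List α → A.Q → Prop
  | nil (q : A.Q) : RevNFA.Path A q [] q
  | cons {p q r : A.Q} {a : α} {w : List α} :
      A.δ p a q → RevNFA.Path A q w r → RevNFA.Path A p (a :: w) r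

/-- The language recognized by a reversible NFA. -/
def RevNFA.lang {α : Type} (A : RevNFA α) : Set (List α) :=
  {w | ∃ p ∈ A.I, ∃ q ∈ A.F, A.Path p w q}

/-- A reversible NFA has exactly one initial state. -/
def RevNFA.OneInitial {α : Type} (A : RevNFA α) : Prop :=
  ∃ q : A.Q, A.I = {q}

/-- `RevL(𝔹,α)`: languages recognized by reversible NFAs. -/
def RevLB (α : Type) : Set (Set (List α)) :=
  {L | ∃ A : RevNFA α, A.lang = L}

/-- `RevL₁(𝔹,α)`: languages recognized by reversible NFAs with exactly one
initial state. -/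
def RevL1B (α : Type) : Set (Set (List α)) :=
  {L | ∃ A : RevNFA α, A.OneInitial ∧ A.lang = L}

end RevWA


namespace RevWA

/-- The Boolean closure of a class `C` of languages over `α`: the smallest class
containing `C` and closed under finite union, finite intersection, and complement
relative to `List α`. -/
inductive BoolClosure {α : Type} (C : Set (Set (List α))) : Set (List α) → Prop
  | base {L : Set (List α)} : L ∈ C → BoolClosure C L
  | empty : BoolClosure C ∅
  | univ : BoolClosure C Set.univ
  | union {L K : Set (List α)} :
      BoolClosure C L → BoolClosure C K → BoolClosure C (L ∪ K)
  | inter {L K : Set (List α)} :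
      BoolClosure C L → BoolClosure C K → BoolClosure C (L ∩ K)
  | compl {L : Set (List α)} : BoolClosure C L → BoolClosure C Lᶜ

end RevWA

namespace RevWA

----------------------------------------------------------------

variable {S : Type} [Semiring S] {α : Type}

structure GWA (S : Type) [Semiring S] (α : Type) where
  ι : Type
  [fin : Fintype ι]
  [dec : DecidableEq ι]
  init : ι → S
  trans : α → Matrix ι ι S
  final : ι → S

attribute [instance] GWA.fin GWA.dec

def GWA.matWord (A : GWA S α) (w : List α) : Matrix A.ι A.ι S := (w.map A.trans).prod

def GWA.series (A : GWA S α) : List α → S := fun w => A.init ⬝ᵥ (A.matWord w).mulVec A.final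

def rowOk' {ι : Type} (M : Matrix ι ι S) : Prop := ∀ i j j', M i j ≠ 0 → M i j' ≠ 0 → j = j'
def colOk' {ι : Type} (M : Matrix ι ι S) : Prop := ∀ i i' j, M i j ≠ 0 → M i' j ≠ 0 → i = i'

def GWA.GRev (A : GWA S α) : Prop := ∀ a, rowOk' (A.trans a) ∧ colOk' (A.trans a)

lemma GWA.matWord_nil (A : GWA S α) : A.matWord [] = 1 := rfl
lemma GWA.matWord_cons (A : GWA S α) (a : α) (w : List α) :
    A.matWord (a :: w) = A.trans a * A.matWord w := by
  simp [GWA.matWord]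

theorem GWA.series_mem_Rev (A : GWA S α) (hA : A.GRev) : A.series ∈ Rev S α := by
  classical
  let e := Fintype.equivFin A.ι
  refine ⟨⟨Fintype.card A.ι, A.init ∘ e.symm,
    fun a => (A.trans a).submatrix e.symm e.symm, A.final ∘ e.symm⟩, ?_, ?_⟩
  · intro a
    refine ⟨?_, ?_⟩
    · intro i j j' h1 h2
      exact e.symm.injective ((hA a).1 _ _ _ h1 h2)
    · intro i i' j h1 h2
      exact e.symm.injective ((hA a).2 _ _ _ h1 h2)
  · funext w
    have hm : (WA.matWord ⟨Fintype.card A.ι, A.init ∘ e.symm,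
        fun a => (A.trans a).submatrix e.symm e.symm, A.final ∘ e.symm⟩ w)
        = (A.matWord w).submatrix e.symm e.symm := by
      induction w with
      | nil => simp [WA.matWord, GWA.matWord, submatrix_one_equiv]
      | cons a w ih =>
          have h1 : ∀ (B : WA S α) (a : α) (w : List α),
              B.matWord (a :: w) = B.trans a * B.matWord w := by
            intro B a w; simp [WA.matWord]
          rw [h1, ih, GWA.matWord_cons,
            ← submatrix_mul_equiv (A.trans a) (A.matWord w) _ e.symm _]
    show WA.series _ w = _
    unfold WA.series
    rw [hm]
    have hv : ((A.matWord w).submatrix e.symm e.symm).mulVec (A.final ∘ e.symm)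
        = ((A.matWord w).mulVec A.final) ∘ e.symm := by
      rw [submatrix_mulVec_equiv]
      have h2 : (A.final ∘ ⇑e.symm) ∘ ⇑(e.symm.symm) = A.final := by funext y; simp
      rw [h2]
    rw [hv]
    show (A.init ∘ e.symm) ⬝ᵥ (((A.matWord w).mulVec A.final) ∘ e.symm) = _
    unfold GWA.series dotProduct
    exact Fintype.sum_equiv e.symm _ _ (fun i => rfl)


----------------------------------------------------------------
-- Constructions
----------------------------------------------------------------

section Constructions

variable {R : Type} [CommRing R] {α : Type}

/-- The zero automaton. -/
@[reducible] def gZero (R : Type) [CommRing R] (α : Type) : GWA R α :=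
  ⟨Empty, fun x => x.elim, fun _ => 1, fun x => x.elim⟩

lemma gZero_series (w : List α) : (gZero R α).series w = 0 := by
  simp [GWA.series, gZero, dotProduct]

lemma gZero_rev : (gZero R α).GRev := by
  intro a; exact ⟨fun i => i.elim, fun i => i.elim⟩

/-- The all-words automaton. -/
@[reducible] def gOne (R : Type) [CommRing R] (α : Type) : GWA R α :=
  ⟨PUnit, fun _ => 1, fun _ => 1, fun _ => 1⟩

lemma gOne_matWord (w : List α) : (gOne R α).matWord w = 1 := by
  induction w with
  | nil => rfl
  | cons a w ih =>
      rw [GWA.matWord_cons, ih, mul_one]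

lemma gOne_series (w : List α) : (gOne R α).series w = 1 := by
  simp [GWA.series, gOne_matWord, mulVec, dotProduct, gOne]

lemma gOne_rev : (gOne R α).GRev := by
  intro a
  exact ⟨fun i j j' _ _ => Subsingleton.elim _ _, fun i i' j _ _ => Subsingleton.elim _ _⟩

/-- Sum (disjoint union) of automata. -/
@[reducible] def gSum (A B : GWA R α) : GWA R α :=
  ⟨A.ι ⊕ B.ι, Sum.elim A.init B.init,
    fun a => Matrix.fromBlocks (A.trans a) 0 0 (B.trans a),
    Sum.elim A.final B.final⟩

lemma gSum_matWord (A B : GWA R α) (w : List α) :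
    (gSum A B).matWord w = Matrix.fromBlocks (A.matWord w) 0 0 (B.matWord w) := by
  induction w with
  | nil =>
      show (1 : Matrix _ _ R) = _
      rw [GWA.matWord_nil, GWA.matWord_nil, Matrix.fromBlocks_one]
  | cons a w ih =>
      rw [GWA.matWord_cons, ih, GWA.matWord_cons, GWA.matWord_cons]
      show Matrix.fromBlocks (A.trans a) 0 0 (B.trans a) * _ = _
      rw [Matrix.fromBlocks_multiply]
      simp

lemma gSum_series (A B : GWA R α) (w : List α) :
    (gSum A B).series w = A.series w + B.series w := by
  unfold GWA.series
  rw [gSum_matWord]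
  show Sum.elim A.init B.init ⬝ᵥ _ = _
  rw [Matrix.fromBlocks_mulVec]
  simp only [Matrix.zero_mulVec, add_zero, zero_add, Sum.elim_comp_inl, Sum.elim_comp_inr]
  rw [sumElim_dotProduct_sumElim]

lemma gSum_rev {A B : GWA R α} (hA : A.GRev) (hB : B.GRev) : (gSum A B).GRev := by
  intro a
  constructor
  · rintro (i | i) (j | j) (j' | j') h1 h2 <;>
      simp only [gSum, Matrix.fromBlocks_apply₁₁, Matrix.fromBlocks_apply₁₂,
        Matrix.fromBlocks_apply₂₁, Matrix.fromBlocks_apply₂₂, Matrix.zero_apply,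
        ne_eq, not_true_eq_false] at h1 h2 <;> first
      | exact (h1 rfl).elim | exact (h2 rfl).elim
      | exact congrArg Sum.inl ((hA a).1 _ _ _ h1 h2)
      | exact congrArg Sum.inr ((hB a).1 _ _ _ h1 h2)
  · rintro (i | i) (i' | i') (j | j) h1 h2 <;>
      simp only [gSum, Matrix.fromBlocks_apply₁₁, Matrix.fromBlocks_apply₁₂,
        Matrix.fromBlocks_apply₂₁, Matrix.fromBlocks_apply₂₂, Matrix.zero_apply,
        ne_eq, not_true_eq_false] at h1 h2 <;> first
      | exact (h1 rfl).elim | exact (h2 rfl).elim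
      | exact congrArg Sum.inl ((hA a).2 _ _ _ h1 h2)
      | exact congrArg Sum.inr ((hB a).2 _ _ _ h1 h2)

/-- Product (Kronecker) of automata. -/
@[reducible] def gProd (A B : GWA R α) : GWA R α :=
  ⟨A.ι × B.ι, fun pq => A.init pq.1 * B.init pq.2,
    fun a => Matrix.kroneckerMap (· * ·) (A.trans a) (B.trans a),
    fun pq => A.final pq.1 * B.final pq.2⟩

lemma gProd_matWord (A B : GWA R α) (w : List α) :
    (gProd A B).matWord w = Matrix.kroneckerMap (· * ·) (A.matWord w) (B.matWord w) := by
  induction w with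
  | nil =>
      show (1 : Matrix _ _ R) = _
      rw [GWA.matWord_nil, GWA.matWord_nil]
      exact (Matrix.one_kronecker_one).symm
  | cons a w ih =>
      rw [GWA.matWord_cons, ih, GWA.matWord_cons, GWA.matWord_cons]
      show Matrix.kroneckerMap (· * ·) (A.trans a) (B.trans a) * _ = _
      exact (Matrix.mul_kronecker_mul _ _ _ _).symm

lemma gProd_series (A B : GWA R α) (w : List α) :
    (gProd A B).series w = A.series w * B.series w := by
  unfold GWA.series
  rw [gProd_matWord]
  show (∑ pq : A.ι × B.ι, (A.init pq.1 * B.init pq.2) *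
      (∑ rs : A.ι × B.ι, (A.matWord w pq.1 rs.1 * B.matWord w pq.2 rs.2) *
        (A.final rs.1 * B.final rs.2))) = _
  rw [Fintype.sum_prod_type]
  have key : ∀ p q, (∑ rs : A.ι × B.ι, (A.matWord w p rs.1 * B.matWord w q rs.2) *
      (A.final rs.1 * B.final rs.2))
      = (∑ r, A.matWord w p r * A.final r) * (∑ s, B.matWord w q s * B.final s) := by
    intro p q
    rw [Fintype.sum_prod_type, Finset.sum_mul_sum]
    apply Finset.sum_congr rfl; intro r _
    apply Finset.sum_congr rfl; intro s _
    ring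
  have : ∀ p, ∑ q, (A.init p * B.init q) *
      (∑ rs : A.ι × B.ι, (A.matWord w p rs.1 * B.matWord w q rs.2) *
        (A.final rs.1 * B.final rs.2))
      = (A.init p * (∑ r, A.matWord w p r * A.final r)) *
        (∑ q, B.init q * (∑ s, B.matWord w q s * B.final s)) := by
    intro p
    rw [Finset.mul_sum]
    apply Finset.sum_congr rfl; intro q _
    rw [key]
    ring
  rw [Finset.sum_congr rfl (fun p _ => this p), ← Finset.sum_mul]
  show _ = (∑ p, A.init p * ∑ r, A.matWord w p r * A.final r) *
    (∑ q, B.init q * ∑ s, B.matWord w q s * B.final s)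
  rfl

lemma gProd_rev {A B : GWA R α} (hA : A.GRev) (hB : B.GRev) : (gProd A B).GRev := by
  intro a
  have hz : ∀ (x y : R), x * y ≠ 0 → x ≠ 0 ∧ y ≠ 0 := by
    intro x y h
    constructor
    · intro hx; exact h (by rw [hx, zero_mul])
    · intro hy; exact h (by rw [hy, mul_zero])
  constructor
  · rintro ⟨p, q⟩ ⟨r, s⟩ ⟨r', s'⟩ h1 h2
    obtain ⟨ha1, hb1⟩ := hz _ _ h1
    obtain ⟨ha2, hb2⟩ := hz _ _ h2
    exact Prod.ext ((hA a).1 _ _ _ ha1 ha2) ((hB a).1 _ _ _ hb1 hb2)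
  · rintro ⟨p, q⟩ ⟨p', q'⟩ ⟨r, s⟩ h1 h2
    obtain ⟨ha1, hb1⟩ := hz _ _ h1
    obtain ⟨ha2, hb2⟩ := hz _ _ h2
    exact Prod.ext ((hA a).2 _ _ _ ha1 ha2) ((hB a).2 _ _ _ hb1 hb2)

/-- Negate the final vector. -/
@[reducible] def gNeg (A : GWA R α) : GWA R α := ⟨A.ι, A.init, A.trans, fun q => -(A.final q)⟩

lemma gNeg_series (A : GWA R α) (w : List α) : (gNeg A).series w = -(A.series w) := by
  unfold GWA.series
  show A.init ⬝ᵥ (A.matWord w).mulVec (-A.final) = _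
  rw [Matrix.mulVec_neg, dotProduct_neg]

lemma gNeg_rev {A : GWA R α} (hA : A.GRev) : (gNeg A).GRev := hA

end Constructions

----------------------------------------------------------------
-- NFA to weighted automaton; the predicate Good
----------------------------------------------------------------

section NFAtoWA

variable {R : Type} [CommRing R] {α : Type}

lemma RevNFA.path_nil_iff (A : RevNFA α) (p q : A.Q) : A.Path p [] q ↔ p = q := by
  constructor
  · intro h; cases h; rfl
  · rintro rfl; exact RevNFA.Path.nil p

lemma RevNFA.path_cons_iff (A : RevNFA α) (p q : A.Q) (a : α) (w : List α) :
    A.Path p (a :: w) q ↔ ∃ r, A.δ p a r ∧ A.Path r w q := by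
  constructor
  · intro h
    cases h with
    | cons hd hp => exact ⟨_, hd, hp⟩
  · rintro ⟨r, hd, hp⟩; exact RevNFA.Path.cons hd hp

lemma RevNFA.path_det (A : RevNFA α) {w : List α} {p q q' : A.Q}
    (h1 : A.Path p w q) (h2 : A.Path p w q') : q = q' := by
  induction w generalizing p with
  | nil =>
      rw [(A.path_nil_iff p q).mp h1] at h2
      exact ((A.path_nil_iff q q').mp h2)
  | cons a w ih =>
      obtain ⟨r, hd, hp⟩ := (A.path_cons_iff p q a w).mp h1
      obtain ⟨r', hd', hp'⟩ := (A.path_cons_iff p q' a w).mp h2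
      cases A.det p a r r' hd hd'
      exact ih hp hp'

open Classical in
/-- The weighted automaton associated to a reversible NFA, with one chosen
initial state. -/
@[reducible] noncomputable def gOfNFA (R : Type) [CommRing R] (A : RevNFA α) (p₀ : A.Q) : GWA R α :=
  letI := A.fintypeQ
  letI : DecidableEq A.Q := Classical.decEq _
  ⟨A.Q, fun q => if q = p₀ then 1 else 0, fun a p q => if A.δ p a q then 1 else 0,
    fun q => if q ∈ A.F then 1 else 0⟩

open Classical in
lemma gOfNFA_matWord (A : RevNFA α) (p₀ : A.Q) (w : List α) (p q : A.Q) :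
    (gOfNFA R A p₀).matWord w p q = if A.Path p w q then 1 else 0 := by
  classical
  letI := A.fintypeQ
  induction w generalizing p with
  | nil =>
      rw [GWA.matWord_nil]
      show (if p = q then (1:R) else 0) = _
      by_cases h : p = q
      · rw [if_pos h, if_pos ((A.path_nil_iff p q).mpr h)]
      · rw [if_neg h, if_neg (fun hp => h ((A.path_nil_iff p q).mp hp))]
  | cons a w ih =>
      rw [GWA.matWord_cons, Matrix.mul_apply]
      by_cases hex : ∃ r, A.δ p a r
      · obtain ⟨r₀, hr₀⟩ := hex
        rw [Finset.sum_eq_single r₀]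
        · show (if A.δ p a r₀ then (1:R) else 0) * _ = _
          rw [if_pos hr₀, one_mul, ih]
          have : A.Path p (a :: w) q ↔ A.Path r₀ w q := by
            rw [A.path_cons_iff]
            constructor
            · rintro ⟨r, hd, hp⟩; cases A.det p a r r₀ hd hr₀; exact hp
            · intro hp; exact ⟨r₀, hr₀, hp⟩
          by_cases hp : A.Path r₀ w q
          · rw [if_pos hp, if_pos (this.mpr hp)]
          · rw [if_neg hp, if_neg (fun h => hp (this.mp h))]
        · intro r _ hne
          show (if A.δ p a r then (1:R) else 0) * _ = 0
          rw [if_neg (fun hd => hne (A.det p a r r₀ hd hr₀)), zero_mul]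
        · intro h
          exact absurd (Finset.mem_univ r₀) h
      · have hall : ∀ r, ¬ A.δ p a r := fun r hr => hex ⟨r, hr⟩
        have hnp : ¬ A.Path p (a :: w) q := by
          intro h
          obtain ⟨r, hd, _⟩ := (A.path_cons_iff p q a w).mp h
          exact hall r hd
        rw [if_neg hnp]
        apply Finset.sum_eq_zero
        intro r _
        show (if A.δ p a r then (1:R) else 0) * _ = 0
        rw [if_neg (hall r), zero_mul]

open Classical in
lemma gOfNFA_series (A : RevNFA α) (p₀ : A.Q) (w : List α) :
    (gOfNFA R A p₀).series w = if (∃ q ∈ A.F, A.Path p₀ w q) then 1 else 0 := by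
  classical
  letI := A.fintypeQ
  unfold GWA.series dotProduct Matrix.mulVec
  show (∑ p : A.Q, (if p = p₀ then (1:R) else 0) * _) = _
  rw [Finset.sum_eq_single p₀]
  · rw [if_pos rfl, one_mul]
    show (∑ q : A.Q, (gOfNFA R A p₀).matWord w p₀ q * (if q ∈ A.F then (1:R) else 0)) = _
    by_cases hex : ∃ q ∈ A.F, A.Path p₀ w q
    · obtain ⟨q₀, hqF, hqP⟩ := hex
      rw [if_pos ⟨q₀, hqF, hqP⟩, Finset.sum_eq_single q₀]
      · rw [gOfNFA_matWord, if_pos hqP, if_pos hqF, one_mul]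
      · intro q _ hne
        rw [gOfNFA_matWord]
        by_cases hp : A.Path p₀ w q
        · exact absurd (A.path_det hp hqP) hne
        · rw [if_neg hp, zero_mul]
      · intro h; exact absurd (Finset.mem_univ q₀) h
    · rw [if_neg hex]
      apply Finset.sum_eq_zero
      intro q _
      rw [gOfNFA_matWord]
      by_cases hqF : q ∈ A.F
      · rw [if_neg (fun hp => hex ⟨q, hqF, hp⟩), zero_mul]
      · rw [if_neg hqF, mul_zero]
  · intro p _ hne
    rw [if_neg hne, zero_mul]
  · intro h
    letI := A.fintypeQ
    exact absurd (Finset.mem_univ p₀) h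

/-- `Good L`: `L` is the support of a reversible generalized WA with 0/1 values. -/
def Good (R : Type) [CommRing R] {α : Type} (L : Set (List α)) : Prop :=
  ∃ A : GWA R α, A.GRev ∧ (∀ w, A.series w = 0 ∨ A.series w = 1) ∧ supp A.series = L

lemma good_empty : Good R (∅ : Set (List α)) := by
  refine ⟨gZero R α, gZero_rev, ?_, ?_⟩
  · intro w; left; exact gZero_series w
  · ext w; simp [supp, gZero_series]

lemma good_univ (h01 : (1:R) ≠ 0) : Good R (Set.univ : Set (List α)) := by
  refine ⟨gOne R α, gOne_rev, ?_, ?_⟩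
  · intro w; right; exact gOne_series w
  · ext w; simp [supp, gOne_series, h01]

lemma good_union (h01 : (1:R) ≠ 0) {L K : Set (List α)} (hL : Good R L) (hK : Good R K) :
    Good R (L ∪ K) := by
  obtain ⟨A, hArev, hA01, hAsupp⟩ := hL
  obtain ⟨B, hBrev, hB01, hBsupp⟩ := hK
  refine ⟨gSum (gSum A B) (gNeg (gProd A B)), gSum_rev (gSum_rev hArev hBrev) (gNeg_rev (gProd_rev hArev hBrev)), ?_, ?_⟩
  all_goals
    have hs : ∀ w, (gSum (gSum A B) (gNeg (gProd A B))).series w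
        = A.series w + B.series w - A.series w * B.series w := by
      intro w
      rw [gSum_series, gSum_series, gNeg_series, gProd_series]
      ring
  · intro w
    rw [hs]
    rcases hA01 w with h1 | h1 <;> rcases hB01 w with h2 | h2 <;> rw [h1, h2] <;>
      [left; right; right; right] <;> ring
  · rw [← hAsupp, ← hBsupp]
    ext w
    simp only [supp, Set.mem_setOf_eq, Set.mem_union, hs]
    rcases hA01 w with h1 | h1 <;> rcases hB01 w with h2 | h2 <;> rw [h1, h2] <;>
      ring_nf <;> simp [h01]

lemma good_inter {L K : Set (List α)} (hL : Good R L) (hK : Good R K) :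
    Good R (L ∩ K) := by
  obtain ⟨A, hArev, hA01, hAsupp⟩ := hL
  obtain ⟨B, hBrev, hB01, hBsupp⟩ := hK
  refine ⟨gProd A B, gProd_rev hArev hBrev, ?_, ?_⟩
  · intro w
    rw [gProd_series]
    rcases hA01 w with h1 | h1 <;> rcases hB01 w with h2 | h2 <;> rw [h1, h2] <;>
      [left; left; left; right] <;> ring
  · rw [← hAsupp, ← hBsupp]
    ext w
    simp only [supp, Set.mem_setOf_eq, Set.mem_inter_iff, gProd_series]
    constructor
    · intro h
      constructor
      · intro h'; apply h; rw [h', zero_mul]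
      · intro h'; apply h; rw [h', mul_zero]
    · rintro ⟨h1, h2⟩ h
      rcases hA01 w with ha | ha
      · exact h1 ha
      · rcases hB01 w with hb | hb
        · exact h2 hb
        · rw [ha, hb, mul_one] at h
          exact h1 (ha.trans h)

lemma good_compl (h01 : (1:R) ≠ 0) {L : Set (List α)} (hL : Good R L) : Good R Lᶜ := by
  obtain ⟨A, hArev, hA01, hAsupp⟩ := hL
  refine ⟨gSum (gOne R α) (gNeg A), gSum_rev gOne_rev (gNeg_rev hArev), ?_, ?_⟩
  all_goals
    have hs : ∀ w, (gSum (gOne R α) (gNeg A)).series w = 1 - A.series w := by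
      intro w
      rw [gSum_series, gOne_series, gNeg_series]
      ring
  · intro w
    rw [hs]
    rcases hA01 w with h1 | h1 <;> rw [h1] <;> [right; left] <;> ring
  · rw [← hAsupp]
    ext w
    simp only [supp, Set.mem_setOf_eq, Set.mem_compl_iff, hs]
    rcases hA01 w with h1 | h1 <;> rw [h1] <;> ring_nf <;> simp [h01]

lemma good_single (h01 : (1:R) ≠ 0) (A : RevNFA α) (p₀ : A.Q) :
    Good R {w : List α | ∃ q ∈ A.F, A.Path p₀ w q} := by
  refine ⟨gOfNFA R A p₀, ?_, ?_, ?_⟩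
  · intro a
    constructor
    · intro p q q' h1 h2
      have d1 : A.δ p a q := by
        by_contra hd
        exact h1 (if_neg hd)
      have d2 : A.δ p a q' := by
        by_contra hd
        exact h2 (if_neg hd)
      exact A.det p a q q' d1 d2
    · intro p p' q h1 h2
      have d1 : A.δ p a q := by
        by_contra hd
        exact h1 (if_neg hd)
      have d2 : A.δ p' a q := by
        by_contra hd
        exact h2 (if_neg hd)
      exact A.codet p p' a q d1 d2
  · intro w
    rw [gOfNFA_series]
    by_cases h : ∃ q ∈ A.F, A.Path p₀ w q
    · right; rw [if_pos h]
    · left; rw [if_neg h]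
  · ext w
    simp only [supp, Set.mem_setOf_eq, gOfNFA_series]
    by_cases h : ∃ q ∈ A.F, A.Path p₀ w q
    · simp [if_pos h, h, h01]
    · simp [if_neg h, h]

lemma good_base (h01 : (1:R) ≠ 0) {L : Set (List α)} (hL : L ∈ RevLB α) : Good R L := by
  obtain ⟨A, rfl⟩ := hL
  letI := A.fintypeQ
  have hlang : A.lang = ⋃ p ∈ A.I, {w : List α | ∃ q ∈ A.F, A.Path p w q} := by
    ext w
    simp only [RevNFA.lang, Set.mem_setOf_eq, Set.mem_iUnion]
    constructor
    · rintro ⟨p, hp, h⟩; exact ⟨p, hp, h⟩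
    · rintro ⟨p, hp, h⟩; exact ⟨p, hp, h⟩
  rw [hlang]
  have : ∀ T : Set A.Q, Good R (⋃ p ∈ T, {w : List α | ∃ q ∈ A.F, A.Path p w q}) := by
    intro T
    refine Set.Finite.induction_on T (Set.toFinite T) ?_ ?_
    · simpa using (good_empty (R := R) (α := α))
    · intro x T' _ _ ih
      rw [Set.biUnion_insert]
      exact good_union h01 (good_single h01 A x) ih
  exact this A.I

theorem boolClosure_subset_revl (h01 : (1:R) ≠ 0) {L : Set (List α)}
    (hL : BoolClosure (RevLB α) L) : L ∈ RevL R α := by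
  have hgood : Good R L := by
    induction hL with
    | base h => exact good_base h01 h
    | empty => exact good_empty
    | univ => exact good_univ h01
    | union _ _ ih1 ih2 => exact good_union h01 ih1 ih2
    | inter _ _ ih1 ih2 => exact good_inter ih1 ih2
    | compl _ ih => exact good_compl h01 ih
  obtain ⟨A, hrev, _, hsupp⟩ := hgood
  exact ⟨A.series, A.series_mem_Rev hrev, hsupp⟩

end NFAtoWA

----------------------------------------------------------------
-- Part 2 helpers
----------------------------------------------------------------

section Part2Helpers

variable {α : Type}

def matProd {S : Type} [Semiring S] {n : ℕ} (μ : α → Matrix (Fin n) (Fin n) S)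
    (w : List α) : Matrix (Fin n) (Fin n) S := (w.map μ).prod

lemma matProd_nil {S : Type} [Semiring S] {n : ℕ} (μ : α → Matrix (Fin n) (Fin n) S) :
    matProd μ [] = 1 := rfl

lemma matProd_cons {S : Type} [Semiring S] {n : ℕ} (μ : α → Matrix (Fin n) (Fin n) S)
    (a : α) (w : List α) : matProd μ (a :: w) = μ a * matProd μ w := by
  simp [matProd]

lemma bc_biUnion {C : Set (Set (List α))} {ι : Type} {T : Set ι} (hT : T.Finite)
    {f : ι → Set (List α)} (h : ∀ x ∈ T, BoolClosure C (f x)) :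
    BoolClosure C (⋃ x ∈ T, f x) := by
  revert h
  refine Set.Finite.induction_on T hT ?_ ?_
  · intro _
    rw [Set.biUnion_empty]
    exact BoolClosure.empty
  · intro a s _ _ ih h
    rw [Set.biUnion_insert]
    exact BoolClosure.union (h a (Set.mem_insert a s))
      (ih fun x hx => h x (Set.mem_insert_of_mem a hx))

lemma bc_biInter {C : Set (Set (List α))} {ι : Type} {T : Set ι} (hT : T.Finite)
    {f : ι → Set (List α)} (h : ∀ x ∈ T, BoolClosure C (f x)) :
    BoolClosure C (⋂ x ∈ T, f x) := by
  revert h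
  refine Set.Finite.induction_on T hT ?_ ?_
  · intro _
    rw [Set.biInter_empty]
    exact BoolClosure.univ
  · intro a s _ _ ih h
    rw [Set.biInter_insert]
    exact BoolClosure.inter (h a (Set.mem_insert a s))
      (ih fun x hx => h x (Set.mem_insert_of_mem a hx))

lemma mul_apply_single {S : Type} [Semiring S] {n : ℕ} {M N : Matrix (Fin n) (Fin n) S}
    (h : rowOk M) {p r : Fin n} (hpr : M p r ≠ 0) (q : Fin n) :
    (M * N) p q = M p r * N r q := by
  rw [Matrix.mul_apply]
  apply Finset.sum_eq_single r
  · intro x _ hx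
    by_cases hz : M p x = 0
    · rw [hz, zero_mul]
    · exact absurd (h p x r hz hpr) hx
  · intro hr
    exact absurd (Finset.mem_univ r) hr

lemma exists_entry_of_mul_ne_zero {S : Type} [Semiring S] {n : ℕ}
    {M N : Matrix (Fin n) (Fin n) S} {p q : Fin n} (h : (M * N) p q ≠ 0) :
    ∃ r, M p r ≠ 0 ∧ N r q ≠ 0 := by
  rw [Matrix.mul_apply] at h
  obtain ⟨r, _, hr⟩ := Finset.exists_ne_zero_of_sum_ne_zero h
  refine ⟨r, ?_, ?_⟩
  · intro hz; exact hr (by rw [hz, zero_mul])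
  · intro hz; exact hr (by rw [hz, mul_zero])

lemma multiset_prod_eq_zero {S : Type} [CommRing S] [Fintype S] {N : ℕ} (hN : 1 ≤ N)
    (hnil : ∀ x : S, ¬IsUnit x → x ^ N = 0) (M : Multiset S)
    (hcard : N * Fintype.card S < Multiset.card M) (hx : ∀ x ∈ M, ¬IsUnit x) :
    M.prod = 0 := by
  classical
  have hd : ∃ d ∈ M.toFinset, N ≤ M.count d := by
    by_contra hcon
    push_neg at hcon
    have h1 : Multiset.card M = ∑ d ∈ M.toFinset, M.count d :=
      (Multiset.toFinset_sum_count_eq M).symm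
    have h2 : ∑ d ∈ M.toFinset, M.count d ≤ ∑ _d ∈ M.toFinset, (N - 1) :=
      Finset.sum_le_sum (fun d hd => by have := hcon d hd; omega)
    have h3 : ∑ _d ∈ M.toFinset, (N - 1) = M.toFinset.card * (N - 1) := by
      rw [Finset.sum_const, smul_eq_mul]
    have h4 : M.toFinset.card ≤ Fintype.card S := M.toFinset.card_le_univ
    have : Multiset.card M ≤ Fintype.card S * (N - 1) := by
      rw [h1]
      calc ∑ d ∈ M.toFinset, M.count d ≤ M.toFinset.card * (N - 1) := by rw [← h3]; exact h2
        _ ≤ Fintype.card S * (N - 1) := Nat.mul_le_mul_right _ h4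
    have : Fintype.card S * (N - 1) ≤ N * Fintype.card S := by
      rw [Nat.mul_comm]
      exact Nat.mul_le_mul_right _ (by omega)
    omega
  obtain ⟨d, hdm, hdc⟩ := hd
  obtain ⟨u, hu⟩ := Multiset.le_iff_exists_add.mp (Multiset.le_count_iff_replicate_le.mp hdc)
  rw [hu, Multiset.prod_add, Multiset.prod_replicate,
    hnil d (hx d (Multiset.mem_toFinset.mp hdm)), zero_mul]

lemma nonunit_pow_eq_zero {S : Type} [CommRing S] [Fintype S]
    (hid : ∀ x : S, x * x = x → x = 0 ∨ x = 1) {x : S} (hx : ¬IsUnit x) :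
    x ^ ((Fintype.card S + 1) * Fintype.card S) = 0 := by
  classical
  have hmap : ¬Function.Injective (fun k : Fin (Fintype.card S + 1) => x ^ ((k : ℕ) + 1)) := by
    intro hinj
    have := Fintype.card_le_of_injective _ hinj
    simp at this
  obtain ⟨k, k', heq, hne⟩ := Function.not_injective_iff.mp hmap
  -- arrange k < k'
  have main : ∀ (a b : ℕ), a < b → x ^ (a + 1) = x ^ (b + 1) → a + 1 ≤ Fintype.card S + 1 →
      b + 1 ≤ Fintype.card S + 1 →
      x ^ ((Fintype.card S + 1) * Fintype.card S) = 0 := by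
    intro a b hab hpow ha hb
    set A := a + 1 with hA
    set B := b + 1 with hB
    set p := B - A with hp
    have hp1 : 1 ≤ p := by omega
    have hAB : x ^ A = x ^ B := hpow
    have hshift : ∀ s, A ≤ s → x ^ s = x ^ (s + p) := by
      intro s hs
      have h1 : x ^ s = x ^ (s - A) * x ^ A := by
        rw [← pow_add]
        congr 1
        omega
      rw [h1, hAB, ← pow_add]
      congr 1
      omega
    have hstep : ∀ m, x ^ (A * p) = x ^ (A * p + m * p) := by
      intro m
      induction m with
      | zero => simp
      | succ m ih =>
          have h1 : A ≤ A * p + m * p := by nlinarith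
          calc x ^ (A * p) = x ^ (A * p + m * p) := ih
            _ = x ^ (A * p + m * p + p) := hshift _ h1
            _ = x ^ (A * p + (m + 1) * p) := by ring_nf
    have hidem : x ^ (A * p) * x ^ (A * p) = x ^ (A * p) := by
      rw [← pow_add]
      exact (hstep A).symm
    rcases hid _ hidem with h0 | h1
    · have hle : A * p ≤ (Fintype.card S + 1) * Fintype.card S := by
        have : p ≤ Fintype.card S := by omega
        have : A ≤ Fintype.card S + 1 := by omega
        nlinarith
      have : x ^ ((Fintype.card S + 1) * Fintype.card S)
          = x ^ (A * p) * x ^ ((Fintype.card S + 1) * Fintype.card S - A * p) := by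
        rw [← pow_add]
        congr 1
        omega
      rw [this, h0, zero_mul]
    · exfalso
      apply hx
      have hge : 1 ≤ A * p := by nlinarith
      refine IsUnit.of_mul_eq_one (x ^ (A * p - 1)) ?_
      rw [← pow_succ']
      rw [show A * p - 1 + 1 = A * p by omega]
      exact h1
  rcases Nat.lt_or_ge (k : ℕ) (k' : ℕ) with h | h
  · exact main k k' h heq (by omega) (by omega)
  · have hlt : (k' : ℕ) < (k : ℕ) := by
      rcases Nat.lt_or_ge (k' : ℕ) (k : ℕ) with h' | h'
      · exact h'
      · exact absurd (Fin.ext (le_antisymm h' h)) hne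
    exact main k' k hlt heq.symm (by omega) (by omega)

end Part2Helpers

----------------------------------------------------------------
-- The local case
----------------------------------------------------------------

section LocalCase

set_option linter.unusedSectionVars false

variable {α : Type} {S : Type} [CommRing S] [Fintype S] {n : ℕ}

/-- Partial product of the recorded non-unit entries. -/
def prodg (K : ℕ) (t : Fin (K + 1)) (g : Fin K → S) : S :=
  ∏ s : Fin K, if (s : ℕ) < (t : ℕ) then g s else 1

/-- Valid configurations of the recording component. -/
def OkSt (K : ℕ) (t : Fin (K + 1)) (g : Fin K → S) : Prop :=
  (∀ s : Fin K, (t : ℕ) ≤ (s : ℕ) → g s = 0) ∧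
    (∀ s : Fin K, (s : ℕ) < (t : ℕ) → ¬ IsUnit (g s) ∧ g s ≠ 0)

lemma prodg_bot (K : ℕ) (t : Fin (K + 1)) (ht : (t : ℕ) = 0) (g : Fin K → S) :
    prodg K t g = 1 := by
  apply Finset.prod_eq_one
  intro s _
  rw [if_neg (by omega)]

lemma okSt_bot (K : ℕ) (t : Fin (K + 1)) (ht : (t : ℕ) = 0) :
    OkSt K t (fun _ => (0 : S)) :=
  ⟨fun _ _ => rfl, fun s hs => absurd hs (by omega)⟩

lemma prodg_update (K : ℕ) (t t' : Fin (K + 1)) (g : Fin K → S) (d : S)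
    (ht : (t : ℕ) < K) (ht' : (t' : ℕ) = (t : ℕ) + 1) :
    prodg K t' (Function.update g ⟨(t : ℕ), ht⟩ d) = prodg K t g * d := by
  classical
  set s0 : Fin K := ⟨(t : ℕ), ht⟩ with hs0
  unfold prodg
  rw [← Finset.mul_prod_erase Finset.univ _ (Finset.mem_univ s0),
    ← Finset.mul_prod_erase Finset.univ
      (fun s : Fin K => if (s : ℕ) < (t : ℕ) then g s else 1) (Finset.mem_univ s0)]
  have hs0v : (s0 : ℕ) = (t : ℕ) := rfl
  have h1 : (if ((s0 : ℕ)) < (t' : ℕ) then Function.update g s0 d s0 else 1) = d := by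
    rw [if_pos (by omega), Function.update_self]
  have h2 : (if ((s0 : ℕ)) < (t : ℕ) then g s0 else 1) = 1 := by
    rw [if_neg (by omega)]
  rw [h1, h2]
  have h3 : ∀ s ∈ Finset.univ.erase s0,
      (if (s : ℕ) < (t' : ℕ) then Function.update g s0 d s else 1)
      = (if (s : ℕ) < (t : ℕ) then g s else 1) := by
    intro s hs
    have hne : s ≠ s0 := Finset.ne_of_mem_erase hs
    have hnev : (s : ℕ) ≠ (t : ℕ) := fun h => hne (Fin.ext h)
    rw [Function.update_of_ne hne]
    by_cases h : (s : ℕ) < (t : ℕ)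
    · rw [if_pos h, if_pos (by omega)]
    · rw [if_neg h, if_neg (by omega)]
  rw [Finset.prod_congr rfl h3]
  ring

lemma okSt_update (K : ℕ) (t t' : Fin (K + 1)) (g : Fin K → S) (d : S)
    (ht : (t : ℕ) < K) (ht' : (t' : ℕ) = (t : ℕ) + 1) (hOk : OkSt K t g)
    (hd0 : d ≠ 0) (hdu : ¬ IsUnit d) :
    OkSt K t' (Function.update g ⟨(t : ℕ), ht⟩ d) := by
  classical
  constructor
  · intro s hs
    have hne : s ≠ ⟨(t : ℕ), ht⟩ := fun h => by
      rw [h] at hs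
      simp at hs
      omega
    rw [Function.update_of_ne hne]
    exact hOk.1 s (by omega)
  · intro s hs
    by_cases h : s = ⟨(t : ℕ), ht⟩
    · rw [h, Function.update_self]
      exact ⟨hdu, hd0⟩
    · rw [Function.update_of_ne h]
      have : (s : ℕ) ≠ (t : ℕ) := fun hc => h (Fin.ext hc)
      exact hOk.2 s (by omega)

lemma prodg_full {N : ℕ} (hN : 1 ≤ N) (hnil : ∀ x : S, ¬IsUnit x → x ^ N = 0)
    (t : Fin (N * Fintype.card S + 1 + 1)) (g : Fin (N * Fintype.card S + 1) → S)
    (hOk : OkSt (N * Fintype.card S + 1) t g) (ht : (t : ℕ) = N * Fintype.card S + 1) :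
    prodg (N * Fintype.card S + 1) t g = 0 := by
  classical
  have h1 : prodg (N * Fintype.card S + 1) t g = ∏ s : Fin (N * Fintype.card S + 1), g s := by
    apply Finset.prod_congr rfl
    intro s _
    have := s.isLt
    rw [if_pos (by omega)]
  rw [h1, Finset.prod_eq_multiset_prod]
  apply multiset_prod_eq_zero hN hnil
  · rw [Multiset.card_map]
    simp
  · intro x hx
    rw [Multiset.mem_map] at hx
    obtain ⟨s, _, rfl⟩ := hx
    have := s.isLt
    exact (hOk.2 s (by omega)).1

/-- State space of the tracking automaton. -/
abbrev QG (S : Type) [CommRing S] (n K : ℕ) : Type :=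
  Fin n × Sˣ × Fin (K + 1) × (Fin K → S)

/-- Transition relation of the tracking automaton. -/
def δG (μ : α → Matrix (Fin n) (Fin n) S) (K : ℕ) :
    QG S n K → α → QG S n K → Prop :=
  fun x a y =>
    μ a x.1 y.1 ≠ 0 ∧
    ((∃ dd : Sˣ, (dd : S) = μ a x.1 y.1 ∧ y.2.1 = x.2.1 * dd ∧ y.2.2.1 = x.2.2.1 ∧
        y.2.2.2 = x.2.2.2)
     ∨ (¬ IsUnit (μ a x.1 y.1) ∧ y.2.1 = x.2.1 ∧
        ∃ ht : (x.2.2.1 : ℕ) < K, (y.2.2.1 : ℕ) = (x.2.2.1 : ℕ) + 1 ∧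
          x.2.2.2 ⟨(x.2.2.1 : ℕ), ht⟩ = 0 ∧
          y.2.2.2 = Function.update x.2.2.2 ⟨(x.2.2.1 : ℕ), ht⟩ (μ a x.1 y.1)))

variable (μ : α → Matrix (Fin n) (Fin n) S) (K : ℕ)

lemma δG_det (hrev : ∀ a, rowOk (μ a) ∧ colOk (μ a)) :
    ∀ x a y y', δG μ K x a y → δG μ K x a y' → y = y' := by
  rintro ⟨p, u, t, g⟩ a ⟨q, v, t1, g1⟩ ⟨q', v', t1', g1'⟩ ⟨hne, hbr⟩ ⟨hne', hbr'⟩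
  dsimp only at hne hbr hne' hbr'
  obtain rfl : q = q' := (hrev a).1 p q q' hne hne'
  rcases hbr with ⟨d1, hd1, hv1, ht1, hg1⟩ | ⟨hnu, hv1, ht, htv1, hgz1, hgu1⟩ <;>
    rcases hbr' with ⟨d2, hd2, hv2, ht2, hg2⟩ | ⟨hnu', hv2, ht', htv2, hgz2, hgu2⟩
  · obtain rfl : d1 = d2 := Units.ext (hd1.trans hd2.symm)
    refine Prod.ext rfl (Prod.ext ?_ (Prod.ext ?_ ?_)) <;> dsimp only
    · rw [hv1, hv2]
    · rw [ht1, ht2]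
    · rw [hg1, hg2]
  · exact absurd (hd1 ▸ d1.isUnit) hnu'
  · exact absurd (hd2 ▸ d2.isUnit) hnu
  · refine Prod.ext rfl (Prod.ext ?_ (Prod.ext ?_ ?_)) <;> dsimp only
    · rw [hv1, hv2]
    · exact Fin.ext (by omega)
    · rw [hgu1, hgu2]

lemma δG_codet (hrev : ∀ a, rowOk (μ a) ∧ colOk (μ a)) :
    ∀ x x' a y, δG μ K x a y → δG μ K x' a y → x = x' := by
  rintro ⟨p, u, t, g⟩ ⟨p', u', t', g'⟩ a ⟨q, v, t1, g1⟩ ⟨hne, hbr⟩ ⟨hne', hbr'⟩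
  dsimp only at hne hbr hne' hbr'
  obtain rfl : p = p' := (hrev a).2 p p' q hne hne'
  rcases hbr with ⟨d1, hd1, hv1, ht1, hg1⟩ | ⟨hnu, hv1, ht, htv1, hgz1, hgu1⟩ <;>
    rcases hbr' with ⟨d2, hd2, hv2, ht2, hg2⟩ | ⟨hnu', hv2, ht', htv2, hgz2, hgu2⟩
  · obtain rfl : d1 = d2 := Units.ext (hd1.trans hd2.symm)
    refine Prod.ext rfl (Prod.ext ?_ (Prod.ext ?_ ?_)) <;> dsimp only
    · exact mul_right_cancel (hv1.symm.trans hv2)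
    · rw [← ht1, ← ht2]
    · rw [← hg1, ← hg2]
  · exact absurd (hd1 ▸ d1.isUnit) hnu'
  · exact absurd (hd2 ▸ d2.isUnit) hnu
  · have hteq : t = t' := Fin.ext (by omega)
    subst hteq
    refine Prod.ext rfl (Prod.ext ?_ (Prod.ext rfl ?_)) <;> dsimp only
    · rw [← hv1, ← hv2]
    · have h1 : g = Function.update g1 ⟨(t : ℕ), ht⟩ 0 := by
        funext s
        by_cases h : s = ⟨(t : ℕ), ht⟩
        · rw [h, Function.update_self]
          exact h ▸ hgz1
        · rw [Function.update_of_ne h, hgu1, Function.update_of_ne h]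
      have h2 : g' = Function.update g1 ⟨(t : ℕ), ht⟩ 0 := by
        funext s
        by_cases h : s = ⟨(t : ℕ), ht'⟩
        · rw [h, Function.update_self]
          exact h ▸ hgz2
        · rw [Function.update_of_ne h, hgu2, Function.update_of_ne h]
      rw [h1, h2]

/-- The tracking automaton. -/
@[reducible] noncomputable def locG (hrev : ∀ a, rowOk (μ a) ∧ colOk (μ a))
    (i j : Fin n) (σf : Sˣ × Fin (K + 1) × (Fin K → S)) :
    RevNFA α :=
  letI : DecidableEq S := Classical.decEq S
  { Q := QG S n K
    fintypeQ := inferInstance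
    δ := δG μ K
    I := {(i, 1, ⟨0, by omega⟩, fun _ => 0)}
    F := {(j, σf)}
    det := fun p a q q' h h' => δG_det μ K hrev p a q q' h h'
    codet := fun p p' a q h h' => δG_codet μ K hrev p p' a q h h' }

lemma locG_path_indep (hrev : ∀ a, rowOk (μ a) ∧ colOk (μ a)) (i j : Fin n)
    (σf σf' : Sˣ × Fin (K + 1) × (Fin K → S)) {x : QG S n K} {w : List α} {y : QG S n K}
    (h : (locG μ K hrev i j σf).Path x w y) : (locG μ K hrev i j σf').Path x w y := by
  induction w generalizing x with
  | nil => exact (RevNFA.path_nil_iff _ _ _).mpr ((RevNFA.path_nil_iff _ _ _).mp h)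
  | cons a w ih =>
      obtain ⟨r, hd, hp⟩ := (RevNFA.path_cons_iff _ _ _ _ _).mp h
      exact (RevNFA.path_cons_iff _ _ _ _ _).mpr ⟨r, hd, ih hp⟩

lemma pathValue (hrev : ∀ a, rowOk (μ a) ∧ colOk (μ a)) (i j : Fin n)
    (σf : Sˣ × Fin (K + 1) × (Fin K → S)) :
    ∀ {w : List α} {p q : Fin n} {u u' : Sˣ} {t t' : Fin (K + 1)} {g g' : Fin K → S},
    OkSt K t g → (locG μ K hrev i j σf).Path (p, u, t, g) w (q, u', t', g') →
    OkSt K t' g' ∧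
      (u' : S) * prodg K t' g' = (u : S) * prodg K t g * matProd μ w p q := by
  intro w
  induction w with
  | nil =>
      intro p q u u' t t' g g' hOk hpath
      have heq := ((locG μ K hrev i j σf).path_nil_iff _ _).mp hpath
      obtain ⟨rfl, rfl, rfl, rfl⟩ : p = q ∧ u = u' ∧ t = t' ∧ g = g' := by
        simpa [Prod.ext_iff] using heq
      refine ⟨hOk, ?_⟩
      rw [matProd_nil, Matrix.one_apply_eq, mul_one]
  | cons a w ih =>
      intro p q u u' t t' g g' hOk hpath
      obtain ⟨σm, hd, hp⟩ := ((locG μ K hrev i j σf).path_cons_iff _ _ _ _).mp hpath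
      obtain ⟨r, v, t1, g1⟩ := σm
      have hd' : δG μ K (p, u, t, g) a (r, v, t1, g1) := hd
      obtain ⟨hne, hbr⟩ := hd'
      dsimp only at hne hbr
      rcases hbr with ⟨dd, hdd, hv, ht, hg⟩ | ⟨hnu, hv, ht, htv, hgz, hgu⟩
      · subst hv ht hg
        obtain ⟨hOk', hval⟩ := ih hOk hp
        refine ⟨hOk', ?_⟩
        rw [hval, matProd_cons, mul_apply_single (hrev a).1 hne q, Units.val_mul, ← hdd]
        ring
      · subst hv hgu
        have hOk1 : OkSt K t1 (Function.update g ⟨(t : ℕ), ht⟩ (μ a p r)) :=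
          okSt_update K t t1 g _ ht htv hOk hne hnu
        have hprod : prodg K t1 (Function.update g ⟨(t : ℕ), ht⟩ (μ a p r))
            = prodg K t g * μ a p r := prodg_update K t t1 g _ ht htv
        obtain ⟨hOk', hval⟩ := ih hOk1 hp
        refine ⟨hOk', ?_⟩
        rw [hval, hprod, matProd_cons, mul_apply_single (hrev a).1 hne q]
        ring

lemma valuePath (hrev : ∀ a, rowOk (μ a) ∧ colOk (μ a)) {N : ℕ} (hN : 1 ≤ N)
    (hnil : ∀ x : S, ¬IsUnit x → x ^ N = 0)
    (hK : K = N * Fintype.card S + 1) (i j : Fin n)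
    (σf : Sˣ × Fin (K + 1) × (Fin K → S)) :
    ∀ {w : List α} {p : Fin n} {u : Sˣ} {t : Fin (K + 1)} {g : Fin K → S},
    OkSt K t g → ∀ q : Fin n, (u : S) * prodg K t g * matProd μ w p q ≠ 0 →
    ∃ (u' : Sˣ) (t' : Fin (K + 1)) (g' : Fin K → S),
      (locG μ K hrev i j σf).Path (p, u, t, g) w (q, u', t', g') := by
  intro w
  induction w with
  | nil =>
      intro p u t g hOk q h
      have hpq : p = q := by
        by_contra hne
        rw [matProd_nil, Matrix.one_apply_ne hne, mul_zero] at h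
        exact h rfl
      subst hpq
      exact ⟨u, t, g, RevNFA.Path.nil _⟩
  | cons a w ih =>
      intro p u t g hOk q h
      have hmul : (μ a * matProd μ w) p q ≠ 0 := by
        intro hz
        rw [matProd_cons, hz, mul_zero] at h
        exact h rfl
      obtain ⟨r, hr1, hr2⟩ := exists_entry_of_mul_ne_zero hmul
      have hsingle : (μ a * matProd μ w) p q = μ a p r * matProd μ w r q :=
        mul_apply_single (hrev a).1 hr1 q
      by_cases hdu : IsUnit (μ a p r)
      · have hstep : δG μ K (p, u, t, g) a (r, u * hdu.unit, t, g) :=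
          ⟨hr1, Or.inl ⟨hdu.unit, hdu.unit_spec, rfl, rfl, rfl⟩⟩
        have hval : ((u * hdu.unit : Sˣ) : S) * prodg K t g * matProd μ w r q
            = (u : S) * prodg K t g * matProd μ (a :: w) p q := by
          rw [matProd_cons, hsingle, Units.val_mul, hdu.unit_spec]
          ring
        have hne' : ((u * hdu.unit : Sˣ) : S) * prodg K t g * matProd μ w r q ≠ 0 := by
          rw [hval]; exact h
        obtain ⟨u', t', g', hpath⟩ := ih hOk q hne'
        refine ⟨u', t', g', RevNFA.Path.cons (q := (r, u * hdu.unit, t, g)) hstep hpath⟩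
      · have ht : (t : ℕ) < K := by
          by_contra hc
          have htK : (t : ℕ) = K := by
            have := t.isLt
            omega
          subst hK
          rw [prodg_full hN hnil t g hOk htK, mul_zero, zero_mul] at h
          exact h rfl
        have ht1lt : (t : ℕ) + 1 < K + 1 := by omega
        have hg0 : g ⟨(t : ℕ), ht⟩ = 0 := hOk.1 _ (le_refl _)
        have hstep : δG μ K (p, u, t, g) a
            (r, u, ⟨(t : ℕ) + 1, ht1lt⟩, Function.update g ⟨(t : ℕ), ht⟩ (μ a p r)) :=
          ⟨hr1, Or.inr ⟨hdu, rfl, ht, rfl, hg0, rfl⟩⟩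
        have hOk1 : OkSt K ⟨(t : ℕ) + 1, ht1lt⟩ (Function.update g ⟨(t : ℕ), ht⟩ (μ a p r)) :=
          okSt_update K t _ g _ ht rfl hOk hr1 hdu
        have hprod : prodg K ⟨(t : ℕ) + 1, ht1lt⟩ (Function.update g ⟨(t : ℕ), ht⟩ (μ a p r))
            = prodg K t g * μ a p r := prodg_update K t _ g _ ht rfl
        have hne' : (u : S) * prodg K ⟨(t : ℕ) + 1, ht1lt⟩
            (Function.update g ⟨(t : ℕ), ht⟩ (μ a p r)) * matProd μ w r q ≠ 0 := by
          rw [hprod, show (u:S) * (prodg K t g * μ a p r) * matProd μ w r q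
            = (u:S) * prodg K t g * (μ a p r * matProd μ w r q) from by ring, ← hsingle,
            ← matProd_cons]
          exact h
        obtain ⟨u', t', g', hpath⟩ := ih hOk1 q hne'
        exact ⟨u', t', g', RevNFA.Path.cons
          (q := (r, u, ⟨(t : ℕ) + 1, ht1lt⟩, Function.update g ⟨(t : ℕ), ht⟩ (μ a p r)))
          hstep hpath⟩

theorem localCase (hrev : ∀ a, rowOk (μ a) ∧ colOk (μ a)) {N : ℕ} (hN : 1 ≤ N)
    (hnil : ∀ x : S, ¬IsUnit x → x ^ N = 0)
    (hK : K = N * Fintype.card S + 1)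
    (i j : Fin n) (c : S) (hc : c ≠ 0) :
    BoolClosure (RevLB α) {w : List α | matProd μ w i j = c} := by
  classical
  have main : {w : List α | matProd μ w i j = c}
      = ⋃ σf ∈ {σ : Sˣ × Fin (K + 1) × (Fin K → S) |
          OkSt K σ.2.1 σ.2.2 ∧ (σ.1 : S) * prodg K σ.2.1 σ.2.2 = c},
        (locG μ K hrev i j σf).lang := by
    ext w
    simp only [Set.mem_setOf_eq, Set.mem_iUnion]
    constructor
    · intro hw
      have hOk0 := okSt_bot (S := S) K ⟨0, by omega⟩ rfl
      have hval0 : ((1 : Sˣ) : S) * prodg K ⟨0, by omega⟩ (fun _ => (0:S))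
          * matProd μ w i j ≠ 0 := by
        rw [prodg_bot K ⟨0, by omega⟩ rfl, Units.val_one, one_mul, one_mul, hw]
        exact hc
      obtain ⟨u', t', g', hpath⟩ :=
        valuePath μ K hrev hN hnil hK i j (1, ⟨0, by omega⟩, fun _ => 0) hOk0 j hval0
      obtain ⟨hOk', hval'⟩ := pathValue μ K hrev i j (1, ⟨0, by omega⟩, fun _ => 0) hOk0 hpath
      rw [prodg_bot K ⟨0, by omega⟩ rfl, Units.val_one, one_mul, one_mul, hw] at hval'
      refine ⟨(u', t', g'), ⟨hOk', hval'⟩, ?_⟩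
      exact ⟨(i, 1, ⟨0, by omega⟩, fun _ => 0), rfl, (j, u', t', g'), rfl,
        locG_path_indep μ K hrev i j _ _ hpath⟩
    · rintro ⟨σf, ⟨hOkf, hvalf⟩, hw⟩
      obtain ⟨st, hst, fn, hfn, hpath⟩ := hw
      have hst' : st = (i, 1, ⟨0, by omega⟩, fun _ => 0) := hst
      have hfn' : fn = (j, σf) := hfn
      subst hst' hfn'
      obtain ⟨u', t', g'⟩ := σf
      obtain ⟨_, hval⟩ := pathValue μ K hrev i j (u', t', g')
        (okSt_bot (S := S) K ⟨0, by omega⟩ rfl) hpath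
      rw [prodg_bot K ⟨0, by omega⟩ rfl, Units.val_one, one_mul, one_mul] at hval
      rw [← hval]
      exact hvalf
  rw [main]
  exact bc_biUnion (Set.toFinite _)
    (fun σ _ => BoolClosure.base ⟨locG μ K hrev i j σ, rfl⟩)

end LocalCase

----------------------------------------------------------------
-- Induction over finite commutative rings
----------------------------------------------------------------

section KeyInduction

set_option linter.unusedSectionVars false

variable {α : Type}

lemma matProd_map {S T : Type} [CommRing S] [CommRing T] (φ : S →+* T) {n : ℕ}
    (μ : α → Matrix (Fin n) (Fin n) S) (w : List α) :
    matProd (fun a => (μ a).map φ) w = (matProd μ w).map φ := by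
  induction w with
  | nil =>
      rw [matProd_nil, matProd_nil]
      exact (Matrix.map_one φ (map_zero φ) (map_one φ)).symm
  | cons a w ih =>
      rw [matProd_cons, matProd_cons, ih]
      exact (Matrix.map_mul).symm

lemma rowOk_map {S T : Type} [CommRing S] [CommRing T] (φ : S →+* T) {n : ℕ}
    {M : Matrix (Fin n) (Fin n) S} (h : rowOk M) : rowOk (M.map φ) := by
  intro i j j' h1 h2
  refine h i j j' (fun h0 => h1 ?_) (fun h0 => h2 ?_)
  · show φ (M i j) = 0
    rw [h0, map_zero]
  · show φ (M i j') = 0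
    rw [h0, map_zero]

lemma colOk_map {S T : Type} [CommRing S] [CommRing T] (φ : S →+* T) {n : ℕ}
    {M : Matrix (Fin n) (Fin n) S} (h : colOk M) : colOk (M.map φ) := by
  intro i i' j h1 h2
  refine h i i' j (fun h0 => h1 ?_) (fun h0 => h2 ?_)
  · show φ (M i j) = 0
    rw [h0, map_zero]
  · show φ (M i' j) = 0
    rw [h0, map_zero]

lemma bc_fiber_zero {S : Type} [CommRing S] [Fintype S] {F : List α → S}
    (h : ∀ c : S, c ≠ 0 → BoolClosure (RevLB α) {w | F w = c}) :
    BoolClosure (RevLB α) {w | F w = 0} := by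
  classical
  have heq : {w : List α | F w = 0} = (⋃ c ∈ {c : S | c ≠ 0}, {w | F w = c})ᶜ := by
    ext w
    simp only [Set.mem_setOf_eq, Set.mem_compl_iff, Set.mem_iUnion]
    constructor
    · rintro h0 ⟨c, hc, hwc⟩
      exact hc (hwc.symm.trans h0)
    · intro hno
      by_contra hne
      exact hno ⟨F w, hne, rfl⟩
  rw [heq]
  exact BoolClosure.compl (bc_biUnion (Set.toFinite _) h)

theorem keyFiber (m : ℕ) :
    ∀ (S : Type) (iC : CommRing S) (iF : Fintype S),
      Fintype.card S ≤ m →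
      ∀ {n : ℕ} (μ : α → Matrix (Fin n) (Fin n) S),
        (∀ a, rowOk (μ a) ∧ colOk (μ a)) →
        ∀ (i j : Fin n) (c : S), c ≠ 0 →
        BoolClosure (RevLB α) {w | matProd μ w i j = c} := by
  induction m with
  | zero =>
      intro S iC iF hcard
      exfalso
      haveI : Nonempty S := ⟨0⟩
      have := Fintype.card_pos (α := S)
      omega
  | succ m ih =>
      intro S iC iF hcard n μ hrev i j c hc
      by_cases hid : ∀ x : S, x * x = x → x = 0 ∨ x = 1
      · -- no nontrivial idempotents: every nonunit is nilpotent
        haveI : Nonempty S := ⟨0⟩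
        have hcpos : 0 < Fintype.card S := Fintype.card_pos
        have hN : 1 ≤ (Fintype.card S + 1) * Fintype.card S :=
          Nat.one_le_iff_ne_zero.mpr (Nat.mul_ne_zero (by omega) (by omega))
        exact localCase μ ((Fintype.card S + 1) * Fintype.card S * Fintype.card S + 1)
          hrev hN (fun x hx => nonunit_pow_eq_zero hid hx) rfl i j c hc
      · push_neg at hid
        obtain ⟨e, hee, he0, he1⟩ := hid
        set I1 : Ideal S := Ideal.span {e} with hI1
        set I2 : Ideal S := Ideal.span {1 - e} with hI2
        set φ1 : S →+* S ⧸ I1 := Ideal.Quotient.mk I1 with hφ1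
        set φ2 : S →+* S ⧸ I2 := Ideal.Quotient.mk I2 with hφ2
        haveI : Finite (S ⧸ I1) := Finite.of_surjective φ1 Ideal.Quotient.mk_surjective
        haveI : Finite (S ⧸ I2) := Finite.of_surjective φ2 Ideal.Quotient.mk_surjective
        letI iF1 : Fintype (S ⧸ I1) := Fintype.ofFinite _
        letI iF2 : Fintype (S ⧸ I2) := Fintype.ofFinite _
        have hlt1 : Fintype.card (S ⧸ I1) < Fintype.card S := by
          refine Fintype.card_lt_of_surjective_not_injective φ1
            Ideal.Quotient.mk_surjective ?_
          intro hinj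
          apply he0
          apply hinj
          rw [map_zero]
          exact Ideal.Quotient.eq_zero_iff_mem.mpr (Ideal.mem_span_singleton_self e)
        have hlt2 : Fintype.card (S ⧸ I2) < Fintype.card S := by
          refine Fintype.card_lt_of_surjective_not_injective φ2
            Ideal.Quotient.mk_surjective ?_
          intro hinj
          have h10 : (1 : S) - e ≠ 0 := fun h => he1 (by
            have : (1 : S) = e := by linear_combination h
            exact this.symm)
          apply h10
          apply hinj
          rw [map_zero]
          exact Ideal.Quotient.eq_zero_iff_mem.mpr (Ideal.mem_span_singleton_self (1 - e))
        have key0 : ∀ z : S, φ1 z = 0 → φ2 z = 0 → z = 0 := by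
          intro z h1 h2
          rw [hφ1, Ideal.Quotient.eq_zero_iff_mem, hI1, Ideal.mem_span_singleton] at h1
          rw [hφ2, Ideal.Quotient.eq_zero_iff_mem, hI2, Ideal.mem_span_singleton] at h2
          obtain ⟨s1, hs1⟩ := h1
          obtain ⟨s2, hs2⟩ := h2
          have hz1 : z * (1 - e) = 0 := by
            calc z * (1 - e) = s1 * (e - e * e) := by rw [hs1]; ring
              _ = 0 := by rw [hee, sub_self, mul_zero]
          have hz2 : z * e = 0 := by
            calc z * e = s2 * (e - e * e) := by rw [hs2]; ring
              _ = 0 := by rw [hee, sub_self, mul_zero]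
          calc z = z * e + z * (1 - e) := by ring
            _ = 0 := by rw [hz1, hz2, add_zero]
        have hrev1 : ∀ a, rowOk ((μ a).map φ1) ∧ colOk ((μ a).map φ1) :=
          fun a => ⟨rowOk_map φ1 (hrev a).1, colOk_map φ1 (hrev a).2⟩
        have hrev2 : ∀ a, rowOk ((μ a).map φ2) ∧ colOk ((μ a).map φ2) :=
          fun a => ⟨rowOk_map φ2 (hrev a).1, colOk_map φ2 (hrev a).2⟩
        have hsplit : {w : List α | matProd μ w i j = c}
            = {w | matProd (fun a => (μ a).map φ1) w i j = φ1 c}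
              ∩ {w | matProd (fun a => (μ a).map φ2) w i j = φ2 c} := by
          ext w
          simp only [Set.mem_setOf_eq, Set.mem_inter_iff, matProd_map, Matrix.map_apply]
          constructor
          · intro h
            rw [h]
            exact ⟨rfl, rfl⟩
          · rintro ⟨h1, h2⟩
            have hz := key0 (matProd μ w i j - c)
              (by rw [map_sub, h1, sub_self]) (by rw [map_sub, h2, sub_self])
            exact sub_eq_zero.mp hz
        rw [hsplit]
        have hbc1 : BoolClosure (RevLB α)
            {w : List α | matProd (fun a => (μ a).map φ1) w i j = φ1 c} := by
          by_cases hc1 : φ1 c = 0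
          · rw [hc1]
            exact bc_fiber_zero (fun c' hc' =>
              ih (S ⧸ I1) inferInstance iF1 (by omega) _ hrev1 i j c' hc')
          · exact ih (S ⧸ I1) inferInstance iF1 (by omega) _ hrev1 i j _ hc1
        have hbc2 : BoolClosure (RevLB α)
            {w : List α | matProd (fun a => (μ a).map φ2) w i j = φ2 c} := by
          by_cases hc2 : φ2 c = 0
          · rw [hc2]
            exact bc_fiber_zero (fun c' hc' =>
              ih (S ⧸ I2) inferInstance iF2 (by omega) _ hrev2 i j c' hc')
          · exact ih (S ⧸ I2) inferInstance iF2 (by omega) _ hrev2 i j _ hc2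
        exact BoolClosure.inter hbc1 hbc2

theorem fiberBC (S : Type) [CommRing S] [Fintype S] {n : ℕ}
    (μ : α → Matrix (Fin n) (Fin n) S) (hrev : ∀ a, rowOk (μ a) ∧ colOk (μ a))
    (i j : Fin n) (c : S) :
    BoolClosure (RevLB α) {w | matProd μ w i j = c} := by
  by_cases hc : c = 0
  · subst hc
    exact bc_fiber_zero (fun c' hc' =>
      keyFiber (Fintype.card S) S inferInstance inferInstance le_rfl μ hrev i j c' hc')
  · exact keyFiber (Fintype.card S) S inferInstance inferInstance le_rfl μ hrev i j c hc

end KeyInduction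

----------------------------------------------------------------
-- Final assembly
----------------------------------------------------------------

section Assembly

set_option linter.unusedSectionVars false

variable {α : Type} [Fintype α]

theorem revl_subset_bc (R : Type) [CommRing R]
    (hlf : ∀ s : Finset R, ((Subring.closure (s : Set R) : Subring R) : Set R).Finite)
    {L : Set (List α)} (hL : L ∈ RevL R α) : BoolClosure (RevLB α) L := by
  classical
  obtain ⟨r, ⟨A, hArev, rfl⟩, rfl⟩ := hL
  set s : Finset R := Finset.univ.image A.init ∪ Finset.univ.image A.final ∪
    Finset.univ.image (fun x : α × Fin A.n × Fin A.n => A.trans x.1 x.2.1 x.2.2) with hs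
  set T : Subring R := Subring.closure (s : Set R) with hT
  haveI : Finite T := (hlf s).to_subtype
  letI : Fintype T := Fintype.ofFinite T
  have hmemI : ∀ p, A.init p ∈ T := fun p => Subring.subset_closure (by
    simp only [hs, Finset.coe_union, Set.mem_union, Finset.coe_image, Set.mem_image]
    exact Or.inl (Or.inl ⟨p, by simp⟩))
  have hmemF : ∀ p, A.final p ∈ T := fun p => Subring.subset_closure (by
    simp only [hs, Finset.coe_union, Set.mem_union, Finset.coe_image, Set.mem_image]
    exact Or.inl (Or.inr ⟨p, by simp⟩))
  have hmemμ : ∀ (a : α) p q, A.trans a p q ∈ T := fun a p q => Subring.subset_closure (by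
    simp only [hs, Finset.coe_union, Set.mem_union, Finset.coe_image, Set.mem_image]
    exact Or.inr ⟨(a, p, q), by simp⟩)
  set μ' : α → Matrix (Fin A.n) (Fin A.n) T :=
    fun a => Matrix.of (fun p q => (⟨A.trans a p q, hmemμ a p q⟩ : T)) with hμ'
  set i' : Fin A.n → T := fun p => ⟨A.init p, hmemI p⟩ with hi'
  set f' : Fin A.n → T := fun p => ⟨A.final p, hmemF p⟩ with hf'
  have hrev' : ∀ a, rowOk (μ' a) ∧ colOk (μ' a) := by
    intro a
    constructor
    · intro p q q' h1 h2
      refine (hArev a).1 p q q' (fun h0 => h1 (Subtype.ext h0)) (fun h0 => h2 (Subtype.ext h0))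
    · intro p p' q h1 h2
      refine (hArev a).2 p p' q (fun h0 => h1 (Subtype.ext h0)) (fun h0 => h2 (Subtype.ext h0))
  have hmat : ∀ w, (matProd μ' w).map T.subtype = A.matWord w := by
    intro w
    have h1 : matProd (fun a => (μ' a).map T.subtype) w = (matProd μ' w).map T.subtype :=
      matProd_map T.subtype μ' w
    have h2 : (fun a => (μ' a).map T.subtype) = A.trans := by
      funext a
      ext p q
      rfl
    rw [h2] at h1
    exact h1.symm
  have hE : ∀ w (p q : Fin A.n), A.matWord w p q = ((matProd μ' w p q : T) : R) := by
    intro w p q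
    rw [← hmat w]
    rfl
  have hseries : ∀ w, A.series w = T.subtype (i' ⬝ᵥ (matProd μ' w).mulVec f') := by
    intro w
    have lhs : A.series w = ∑ p, A.init p * (∑ q, A.matWord w p q * A.final q) := by
      unfold WA.series
      simp only [dotProduct, Matrix.mulVec]
    have rhs : (i' ⬝ᵥ (matProd μ' w).mulVec f')
        = ∑ p, i' p * (∑ q, matProd μ' w p q * f' q) := by
      simp only [dotProduct, Matrix.mulVec]
    rw [lhs, rhs, map_sum]
    apply Finset.sum_congr rfl
    intro p _
    rw [_root_.map_mul, map_sum]
    show A.init p * _ = (i' p : R) * _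
    congr 1
    apply Finset.sum_congr rfl
    intro q _
    rw [_root_.map_mul]
    show A.matWord w p q * A.final q = ((matProd μ' w p q : T) : R) * (f' q : R)
    rw [hE w p q]
  have hsupp : supp A.series
      = ⋃ X ∈ {X : Matrix (Fin A.n) (Fin A.n) T | i' ⬝ᵥ X.mulVec f' ≠ 0},
          ⋂ pq ∈ (Set.univ : Set (Fin A.n × Fin A.n)),
            {w : List α | matProd μ' w pq.1 pq.2 = X pq.1 pq.2} := by
    ext w
    simp only [supp, Set.mem_setOf_eq, Set.mem_iUnion, Set.mem_iInter]
    constructor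
    · intro hw
      refine ⟨matProd μ' w, ?_, fun pq _ => rfl⟩
      intro hz
      apply hw
      rw [hseries w, hz, map_zero]
    · rintro ⟨X, hX, hall⟩
      have hXeq : matProd μ' w = X := by
        ext p q
        exact congrArg Subtype.val (hall (p, q) (Set.mem_univ _))
      intro hz
      apply hX
      rw [← hXeq]
      have : T.subtype (i' ⬝ᵥ (matProd μ' w).mulVec f') = 0 := by
        rw [← hseries w, hz]
      exact Subtype.ext this
  rw [hsupp]
  exact bc_biUnion (Set.toFinite _) fun X _ =>
    bc_biInter (Set.toFinite _) fun pq _ =>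
      fiberBC T μ' hrev' pq.1 pq.2 (X pq.1 pq.2)

end Assembly

end RevWA

open RevWA in
theorem stmt18 (R : Type) [CommRing R] (hR : (0 : R) ≠ 1)
    (hlf : ∀ s : Finset R, ((Subring.closure (s : Set R) : Subring R) : Set R).Finite)
    (α : Type) [Fintype α] [Nonempty α] :
    RevL R α = {L : Set (List α) | BoolClosure (RevLB α) L} := by
  ext L
  simp only [Set.mem_setOf_eq]
  constructor
  · intro hL
    exact revl_subset_bc R hlf hL
  · intro hbc
    exact boolClosure_subset_revl (Ne.symm hR) hbc
end

section
/- Let R be a nontrivial finite commutative ring ((0 : R) ≠ 1, R finite), Σ an alphabet, and r : List Σ → R a rational series over R, i.e., r = ‖A‖ for some weighted automaton A over R and Σ. Then r ∈ Rev(R,Σ) if and only if for every x ∈ R, the support of the series w ↦ r(w) + x belongs to RevL(R,Σ). -/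
open Matrix

noncomputable section RevAux

namespace RevAux

open RevWA

/-- Partial injections on `S`. -/
def PInj (S : Type) : Type :=
  {f : S → Option S // ∀ x y z, f x = some z → f y = some z → x = y}

namespace PInj

variable {S : Type}

instance : One (PInj S) :=
  ⟨⟨some, fun _ _ _ hx hy => (Option.some.inj hx).trans (Option.some.inj hy).symm⟩⟩

instance : Mul (PInj S) :=
  ⟨fun f g => ⟨fun x => (f.1 x).bind g.1, by
    intro x y z hx hy
    dsimp only at hx hy
    rcases hfx : f.1 x with _ | a
    · rw [hfx] at hx; simp at hx
    · rw [hfx] at hx; simp only [Option.bind_some] at hx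
      rcases hfy : f.1 y with _ | b
      · rw [hfy] at hy; simp at hy
      · rw [hfy] at hy; simp only [Option.bind_some] at hy
        have hab : a = b := g.2 a b z hx hy
        exact f.2 x y a hfx (by rw [hab]; exact hfy)⟩⟩

@[simp] lemma one_val (x : S) : (1 : PInj S).1 x = some x := rfl
@[simp] lemma mul_val (f g : PInj S) (x : S) : (f * g).1 x = (f.1 x).bind g.1 := rfl

instance : Monoid (PInj S) where
  mul_assoc f g h := Subtype.ext (funext fun x => by
    simp only [mul_val]; cases f.1 x <;> simp)
  one_mul f := Subtype.ext (funext fun x => by simp)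
  mul_one f := Subtype.ext (funext fun x => by
    simp only [mul_val, one_val]; cases f.1 x <;> simp)

instance _root_.RevAux.optionFinite {T : Type} [Finite T] : Finite (Option T) := by
  haveI := Fintype.ofFinite T; exact Finite.of_fintype _

instance [Finite S] : Finite (PInj S) := Subtype.finite

/-- `v` is a partial identity. -/
def IsPid (v : PInj S) : Prop := ∀ x y, v.1 x = some y → y = x

variable [DecidableEq S]

/-- The partial identity on `D`. -/
def idp (D : Finset S) : PInj S :=
  ⟨fun x => if x ∈ D then some x else none, by
    intro x y z hx hy
    dsimp only at hx hy
    by_cases hxD : x ∈ D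
    · rw [if_pos hxD] at hx
      by_cases hyD : y ∈ D
      · rw [if_pos hyD] at hy
        exact (Option.some.inj hx).trans (Option.some.inj hy).symm
      · rw [if_neg hyD] at hy; cases hy
    · rw [if_neg hxD] at hx; cases hx⟩

@[simp] lemma idp_val (D : Finset S) (x : S) :
    (idp D).1 x = if x ∈ D then some x else none := rfl

lemma isPid_idp (D : Finset S) : IsPid (idp D) := by
  intro x y h
  simp only [idp_val] at h
  split at h
  · exact (Option.some.inj h).symm
  · cases h

variable [Fintype S]

/-- Domain of a partial injection, as a finset. -/
def domF (v : PInj S) : Finset S := Finset.univ.filter fun x => (v.1 x).isSome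

lemma mem_domF {v : PInj S} {x : S} : x ∈ domF v ↔ (v.1 x).isSome := by
  simp [domF]

lemma domF_idp (D : Finset S) : domF (idp D) = D := by
  ext x
  rw [mem_domF, idp_val]
  by_cases h : x ∈ D <;> simp [h]

lemma isPid_eq_idp {v : PInj S} (h : IsPid v) : v = idp (domF v) := by
  apply Subtype.ext; funext x
  rcases hv : v.1 x with _ | y
  · have : ¬ (x ∈ domF v) := by rw [mem_domF, hv]; simp
    simp [idp_val, this]
  · have hyx := h x y hv
    subst hyx
    have : y ∈ domF v := by rw [mem_domF, hv]; simp
    simp [idp_val, this, hv]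

lemma idp_mul_val (D : Finset S) (v : PInj S) (x : S) :
    (idp D * v).1 x = if x ∈ D then v.1 x else none := by
  simp only [mul_val, idp_val]
  split <;> simp

lemma idp_idp_mul {D' D : Finset S} (h : D' ⊆ D) (v : PInj S) :
    idp D' * (idp D * v) = idp D' * v := by
  apply Subtype.ext; funext x
  simp only [idp_mul_val]
  by_cases hx : x ∈ D'
  · simp [hx, h hx]
  · simp [hx]

lemma idp_domF_mul (v : PInj S) : idp (domF v) * v = v := by
  apply Subtype.ext; funext x
  rw [idp_mul_val]
  by_cases hx : x ∈ domF v
  · rw [if_pos hx]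
  · rw [if_neg hx]
    rw [mem_domF, Option.isSome_iff_exists] at hx
    push_neg at hx
    rcases hv : v.1 x with _ | y
    · rfl
    · exact absurd hv (hx y)

lemma domF_idp_mul {D : Finset S} {v : PInj S} (h : D ⊆ domF v) :
    domF (idp D * v) = D := by
  ext x
  rw [mem_domF, idp_mul_val]
  by_cases hx : x ∈ D
  · simp only [if_pos hx, hx, iff_true]
    exact mem_domF.mp (h hx)
  · simp [hx]

/-- `alive v t`: every point of the domain of `v` is mapped by `v` into the domain of `t`. -/
def alive (v t : PInj S) : Prop := ∀ x s, v.1 x = some s → (t.1 s).isSome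

lemma alive_one (v : PInj S) : alive v 1 := fun _ _ _ => rfl

lemma alive_iff {v t : PInj S} :
    alive v t ↔ ∀ x : S, v.1 x = none ∨ ((v.1 x).bind t.1).isSome := by
  constructor
  · intro h x
    rcases hv : v.1 x with _ | s
    · exact Or.inl rfl
    · right
      rw [Option.bind_some]
      exact h x s hv
  · intro h x s hs
    rcases h x with h' | h'
    · rw [hs] at h'; cases h'
    · rw [hs, Option.bind_some] at h'
      exact h'

instance (v t : PInj S) : Decidable (alive v t) :=
  decidable_of_iff _ alive_iff.symm

lemma alive_mul_iff {v t₁ t₂ : PInj S} :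
    alive v (t₁ * t₂) ↔ alive v t₁ ∧ alive (v * t₁) t₂ := by
  constructor
  · intro h
    constructor
    · intro x s hx
      have h2 := h x s hx
      rw [mul_val] at h2
      rcases ht : t₁.1 s with _ | u
      · rw [ht] at h2; simp at h2
      · simp
    · intro x u hx
      rw [mul_val] at hx
      rcases hv : v.1 x with _ | s
      · rw [hv] at hx; simp at hx
      · rw [hv] at hx; simp only [Option.bind_some] at hx
        have h2 := h x s hv
        rw [mul_val, hx] at h2
        simpa using h2
  · rintro ⟨h₁, h₂⟩ x s hx
    rw [mul_val]
    rcases ht : t₁.1 s with _ | u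
    · have := h₁ x s hx; rw [ht] at this; simp at this
    · simp only [Option.bind_some]
      exact h₂ x u (by rw [mul_val, hx, Option.bind_some]; exact ht)

lemma alive_idp_iff {D : Finset S} {t : PInj S} :
    alive (idp D) t ↔ D ⊆ domF t := by
  constructor
  · intro h x hx
    rw [mem_domF]
    exact h x x (by simp [idp_val, hx])
  · intro h x s hs
    simp only [idp_val] at hs
    split at hs
    · cases hs
      exact mem_domF.mp (h (by assumption))
    · cases hs

open Classical in
/-- One step of the subset/restriction automaton. -/
def step (t : PInj S) : PInj (PInj S) :=
  ⟨fun v => if alive v t then some (v * t) else none, by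
    intro v₁ v₂ u h₁ h₂
    dsimp only at h₁ h₂
    split at h₁
    case isFalse => cases h₁
    case isTrue ha₁ =>
    split at h₂
    case isFalse => cases h₂
    case isTrue ha₂ =>
    have e₁ := Option.some.inj h₁
    have e₂ := Option.some.inj h₂
    have e : v₁ * t = v₂ * t := e₁.trans e₂.symm
    apply Subtype.ext; funext x
    have ex : (v₁ * t).1 x = (v₂ * t).1 x := by rw [e]
    rw [mul_val, mul_val] at ex
    rcases h1 : v₁.1 x with _ | s₁ <;> rcases h2 : v₂.1 x with _ | s₂
    · rfl
    · rw [h1, h2] at ex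
      have := ha₂ x s₂ h2
      rcases Option.isSome_iff_exists.mp this with ⟨z, hz⟩
      rw [Option.bind_none, Option.bind_some, hz] at ex
      cases ex
    · rw [h1, h2] at ex
      have := ha₁ x s₁ h1
      rcases Option.isSome_iff_exists.mp this with ⟨z, hz⟩
      rw [Option.bind_none, Option.bind_some, hz] at ex
      cases ex
    · rw [h1, h2, Option.bind_some, Option.bind_some] at ex
      rcases Option.isSome_iff_exists.mp (ha₁ x s₁ h1) with ⟨z, hz⟩
      have hz₂ : t.1 s₂ = some z := by rw [← ex]; exact hz
      rw [t.2 s₁ s₂ z hz hz₂]⟩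

lemma step_val (t v : PInj S) :
    (step t).1 v = if alive v t then some (v * t) else none := rfl

lemma stepWord {α : Type} (θ : α → PInj S) (w : List α) (v : PInj S) :
    ((w.map fun a => step (θ a)).prod).1 v =
      if alive v ((w.map θ).prod) then some (v * (w.map θ).prod) else none := by
  induction w generalizing v with
  | nil =>
    simp only [List.map_nil, List.prod_nil, one_val]
    rw [if_pos (alive_one v), mul_one]
  | cons a w ih =>
    simp only [List.map_cons, List.prod_cons, mul_val, step_val]
    by_cases h : alive v (θ a)
    · rw [if_pos h, Option.bind_some, ih]
      by_cases h2 : alive (v * θ a) ((w.map θ).prod)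
      · rw [if_pos h2, if_pos (alive_mul_iff.mpr ⟨h, h2⟩), mul_assoc]
      · rw [if_neg h2, if_neg (fun hc => h2 (alive_mul_iff.mp hc).2)]
    · rw [if_neg h, Option.bind_none,
        if_neg (fun hc => h (alive_mul_iff.mp hc).1)]

variable (R : Type) [Semiring R]

/-- The 0/1 matrix of a partial injection. -/
def matOf (f : PInj S) : Matrix S S R :=
  Matrix.of fun x y => if f.1 x = some y then 1 else 0

lemma matOf_apply (f : PInj S) (x y : S) :
    matOf R f x y = if f.1 x = some y then 1 else 0 := rfl

lemma matOf_one : matOf (S := S) R 1 = 1 := by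
  ext x y
  simp [matOf_apply, Matrix.one_apply, eq_comm]

lemma matOf_mul (f g : PInj S) : matOf R (f * g) = matOf R f * matOf R g := by
  ext x z
  rcases hfx : f.1 x with _ | a
  · simp [matOf_apply, Matrix.mul_apply, mul_val, hfx]
  · simp only [matOf_apply, Matrix.mul_apply, mul_val, hfx, Option.bind_some,
      Option.some.injEq, ite_mul, one_mul, zero_mul]
    rw [Finset.sum_ite_eq]
    simp

lemma matOf_ne_zero {f : PInj S} {x y : S} (h : matOf R f x y ≠ 0) :
    f.1 x = some y := by
  by_contra hc
  rw [matOf_apply, if_neg hc] at h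
  exact h rfl

end PInj

/-- A function commuting with `1` and `*` maps list products to list products. -/
lemma hom_list_prod {M N : Type*} [Monoid M] [Monoid N] (F : M → N)
    (h1 : F 1 = 1) (hm : ∀ a b, F (a * b) = F a * F b) (l : List M) :
    F l.prod = (l.map F).prod := by
  induction l with
  | nil => simpa using h1
  | cons a l ih => simp [hm, ih]

/-- Any automaton data over a finite state type yields a `WA` with the same series. -/
theorem exists_wa {R : Type} [Semiring R] {α : Type} (Q : Type) [Fintype Q]
    [DecidableEq Q] (ini : Q → R) (tr : α → Matrix Q Q R) (fin : Q → R)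
    (hrow : ∀ a x y y', tr a x y ≠ 0 → tr a x y' ≠ 0 → y = y')
    (hcol : ∀ a x x' y, tr a x y ≠ 0 → tr a x' y ≠ 0 → x = x') :
    ∃ A : WA R α, A.Reversible ∧
      ∀ w : List α, A.series w = ini ⬝ᵥ ((w.map tr).prod).mulVec fin := by
  classical
  let e : Fin (Fintype.card Q) ≃ Q := (Fintype.equivFin Q).symm
  refine ⟨⟨Fintype.card Q, ini ∘ e, fun a => (tr a).submatrix e e, fin ∘ e⟩, ?_, ?_⟩
  · intro a
    constructor
    · intro i j j' h h'
      exact e.injective (hrow a (e i) (e j) (e j') h h')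
    · intro i i' j h h'
      exact e.injective (hcol a (e i) (e i') (e j) h h')
  · intro w
    have hmw : ∀ u : List α,
        (WA.matWord ⟨Fintype.card Q, ini ∘ e, fun a => (tr a).submatrix e e, fin ∘ e⟩ u) =
          ((u.map tr).prod).submatrix e e := by
      intro u
      induction u with
      | nil =>
        simp only [WA.matWord, List.map_nil, List.prod_nil]
        exact (Matrix.submatrix_one_equiv e).symm
      | cons a u ih =>
        simp only [WA.matWord, List.map_cons, List.prod_cons] at ih ⊢
        rw [ih, Matrix.submatrix_mul_equiv (tr a) ((u.map tr).prod) ⇑e e ⇑e]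
    show (ini ∘ ⇑e) ⬝ᵥ _ = _
    rw [hmw w, Matrix.submatrix_mulVec_equiv ((w.map tr).prod) (fin ∘ ⇑e) ⇑e e]
    have hf : (fin ∘ ⇑e) ∘ ⇑e.symm = fin := by
      funext q; simp
    rw [hf]
    show ∑ i, (ini ∘ ⇑e) i * ((((w.map tr).prod).mulVec fin) ∘ ⇑e) i = _
    exact Equiv.sum_comp e fun q => ini q * (((w.map tr).prod).mulVec fin) q
open Finset in
lemma alt_sum {R : Type} [CommRing R] {S : Type} [DecidableEq S] (E D' : Finset S)
    (hDE : D' ⊆ E) :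
    ∑ D ∈ E.powerset.filter (fun D => D' ⊆ D), (-1 : R) ^ ((D \ D').card) =
      if D' = E then 1 else 0 := by
  rw [Finset.sum_nbij' (t := (E \ D').powerset) (g := fun C => (-1 : R) ^ C.card)
    (i := fun D => D \ D') (j := fun C => D' ∪ C)
    (by
      intro D hD
      rw [Finset.mem_filter, Finset.mem_powerset] at hD
      rw [Finset.mem_powerset]
      exact Finset.sdiff_subset_sdiff hD.1 (Finset.Subset.refl _))
    (by
      intro C hC
      rw [Finset.mem_powerset] at hC
      rw [Finset.mem_filter, Finset.mem_powerset]
      exact ⟨Finset.union_subset hDE (hC.trans (Finset.sdiff_subset)), Finset.subset_union_left⟩)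
    (by
      intro D hD
      rw [Finset.mem_filter, Finset.mem_powerset] at hD
      exact Finset.union_sdiff_of_subset hD.2)
    (by
      intro C hC
      rw [Finset.mem_powerset] at hC
      apply Finset.union_sdiff_cancel_left
      intro x hx1 hx2
      exact fun a ha => ((Finset.mem_sdiff.mp (hC (hx2 ha))).2 (hx1 ha)).elim)
    (fun D _ => rfl)]
  have hcast : ∑ C ∈ (E \ D').powerset, (-1 : R) ^ C.card =
      (((∑ C ∈ (E \ D').powerset, (-1 : ℤ) ^ C.card : ℤ) : ℤ) : R) := by
    push_cast
    rfl
  rw [hcast, Finset.sum_powerset_neg_one_pow_card]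
  by_cases h : E \ D' = ∅
  · have : D' = E := Finset.Subset.antisymm hDE (Finset.sdiff_eq_empty_iff_subset.mp h)
    simp [h, this]
  · have : ¬ D' = E := by
      intro he; subst he; simp at h
    simp [h, this]

lemma moebius_sum {R : Type} [CommRing R] {S : Type} [DecidableEq S] [Fintype S]
    (E : Finset S) (F : Finset S → R) :
    ∑ D ∈ E.powerset, ∑ D' ∈ D.powerset,
        (-1 : R) ^ ((D \ D').card) * F D' = F E := by
  rw [Finset.sum_comm' (s' := fun D' => E.powerset.filter (fun D => D' ⊆ D))
    (t' := E.powerset)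
    (by
      intro D D'
      simp only [Finset.mem_powerset, Finset.mem_filter]
      constructor
      · rintro ⟨h1, h2⟩; exact ⟨⟨h1, h2⟩, h2.trans h1⟩
      · rintro ⟨⟨h1, h2⟩, _⟩; exact ⟨h1, h2⟩)]
  have : ∀ D' ∈ E.powerset,
      ∑ D ∈ E.powerset.filter (fun D => D' ⊆ D), (-1 : R) ^ ((D \ D').card) * F D'
        = (if D' = E then 1 else 0) * F D' := by
    intro D' hD'
    rw [← Finset.sum_mul, alt_sum E D' (Finset.mem_powerset.mp hD')]
  rw [Finset.sum_congr rfl this]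
  simp only [ite_mul, one_mul, zero_mul]
  rw [Finset.sum_ite_eq' E.powerset E F]
  simp

open PInj in
/-- Main realization lemma: every function of the product in a finite monoid of
partial injections is a reversible series. -/
theorem factor_mem_rev {R : Type} [CommRing R] {α : Type} (S : Type) [Fintype S]
    [DecidableEq S] (θ : α → PInj S) (h : PInj S → R) :
    (fun w : List α => h ((w.map θ).prod)) ∈ Rev R α := by
  classical
  haveI : Fintype (PInj S) := Fintype.ofFinite _
  set fin : PInj S → R := fun v => ∑ D' ∈ (domF v).powerset,
      (-1 : R) ^ ((domF v \ D').card) * h (idp D' * v) with hfin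
  obtain ⟨A, hrev, hser⟩ := exists_wa (R := R) (α := α) (PInj S)
      (fun v => if IsPid v then 1 else 0)
      (fun a => matOf R (step (θ a)))
      fin
      (fun a x y y' hy hy' => by
        have h1 := matOf_ne_zero R hy
        have h2 := matOf_ne_zero R hy'
        exact Option.some.inj (h1.symm.trans h2))
      (fun a x x' y hy hy' =>
        (step (θ a)).2 x x' y (matOf_ne_zero R hy) (matOf_ne_zero R hy'))
  refine ⟨A, hrev, ?_⟩
  funext w
  rw [hser w]
  have hword : ((w.map fun a => matOf R (step (θ a))).prod)
      = matOf R ((w.map fun a => step (θ a)).prod) := by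
    rw [hom_list_prod (matOf R) (matOf_one R) (matOf_mul R), List.map_map]
    rfl
  rw [hword]
  set T := (w.map θ).prod with hT
  set Ψ := (w.map fun a => step (θ a)).prod with hΨ
  have hmv : ∀ v : PInj S, (matOf R Ψ).mulVec fin v = (Ψ.1 v).elim 0 fin := by
    intro v
    show ∑ v', matOf R Ψ v v' * fin v' = _
    simp only [matOf_apply, ite_mul, one_mul, zero_mul]
    rcases hv : Ψ.1 v with _ | u
    · apply Finset.sum_eq_zero
      intro v' _
      simp
    · simp only [Option.some.injEq]
      rw [Finset.sum_ite_eq]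
      simp
  show ∑ v : PInj S, (if IsPid v then (1:R) else 0) * ((matOf R Ψ).mulVec fin) v = _
  simp only [hmv, ite_mul, one_mul, zero_mul]
  rw [← Finset.sum_filter]
  have hbij : ∑ v ∈ Finset.univ.filter IsPid, (Ψ.1 v).elim 0 fin
      = ∑ D : Finset S, (Ψ.1 (idp D)).elim 0 fin := by
    apply Finset.sum_nbij' (i := fun v => domF v) (j := fun D => idp D)
    · intro v _; exact Finset.mem_univ _
    · intro D _; rw [Finset.mem_filter]; exact ⟨Finset.mem_univ _, isPid_idp D⟩
    · intro v hv
      exact (isPid_eq_idp (Finset.mem_filter.mp hv).2).symm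
    · intro D _; exact domF_idp D
    · intro v hv
      rw [← isPid_eq_idp (Finset.mem_filter.mp hv).2]
  rw [hbij]
  have hval : ∀ D : Finset S, (Ψ.1 (idp D)).elim 0 fin
      = if D ⊆ domF T then fin (idp D * T) else 0 := by
    intro D
    rw [hΨ, stepWord θ w (idp D)]
    by_cases hD : alive (idp D) T
    · rw [if_pos hD, if_pos (alive_idp_iff.mp hD)]
      rfl
    · rw [if_neg hD, if_neg (fun hc => hD (alive_idp_iff.mpr hc))]
      rfl
  simp only [hval]
  rw [← Finset.sum_filter]
  have hpow : Finset.univ.filter (fun D => D ⊆ domF T) = (domF T).powerset := by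
    ext D; simp [Finset.mem_powerset]
  rw [hpow]
  have hfin2 : ∀ D ∈ (domF T).powerset,
      fin (idp D * T) = ∑ D' ∈ D.powerset,
        (-1 : R) ^ ((D \ D').card) * h (idp D' * T) := by
    intro D hD
    rw [Finset.mem_powerset] at hD
    show ∑ D' ∈ (idp D * T).domF.powerset,
        (-1 : R) ^ (((idp D * T).domF \ D').card) * h (idp D' * (idp D * T)) = _
    rw [domF_idp_mul hD]
    apply Finset.sum_congr rfl
    intro D' hD'
    rw [idp_idp_mul (Finset.mem_powerset.mp hD') T]
  rw [Finset.sum_congr rfl hfin2, moebius_sum (domF T) (fun D' => h (idp D' * T)),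
    idp_domF_mul]
namespace PInj

variable {S : Type}

/-- Extend a partial injection to `Option S`, fixing the extra point `none`. -/
def pad (f : PInj S) : PInj (Option S) :=
  ⟨fun x => match x with
    | none => some none
    | some s => (f.1 s).map some, by
    intro x y z hx hy
    match x, y with
    | none, none => rfl
    | none, some s =>
      dsimp only at hx hy
      rcases hf : f.1 s with _ | t
      · rw [hf] at hy; cases hy
      · rw [hf] at hy
        cases hx; cases hy
    | some s, none =>
      dsimp only at hx hy
      rcases hf : f.1 s with _ | t
      · rw [hf] at hx; cases hx
      · rw [hf] at hx
        cases hx; cases hy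
    | some s, some s' =>
      dsimp only at hx hy
      rcases hf : f.1 s with _ | t
      · rw [hf] at hx; cases hx
      · rw [hf] at hx
        rcases hf' : f.1 s' with _ | t'
        · rw [hf'] at hy; cases hy
        · rw [hf'] at hy
          cases hx; cases hy
          rw [f.2 s s' t hf hf']⟩

@[simp] lemma pad_val_none (f : PInj S) : (pad f).1 none = some none := rfl
@[simp] lemma pad_val_some (f : PInj S) (s : S) :
    (pad f).1 (some s) = (f.1 s).map some := rfl

lemma pad_one : pad (1 : PInj S) = 1 := by
  apply Subtype.ext; funext x
  match x with
  | none => rfl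
  | some s => rfl

lemma pad_mul (f g : PInj S) : pad (f * g) = pad f * pad g := by
  apply Subtype.ext; funext x
  match x with
  | none => rfl
  | some s =>
    show ((f.1 s).bind g.1).map some = ((f.1 s).map some).bind (pad g).1
    rcases hf : f.1 s with _ | t
    · rfl
    · rfl


section Pair

variable {S₁ S₂ : Type}

/-- Pairing of two (padded) partial injections. -/
def pair (f : PInj S₁) (g : PInj S₂) : PInj (Option S₁ × Option S₂) :=
  ⟨fun x => ((pad f).1 x.1).bind (fun a => ((pad g).1 x.2).map (fun b => (a, b))), by
    intro x y z hx hy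
    dsimp only at hx hy
    rcases hf : (pad f).1 x.1 with _ | a
    · rw [hf] at hx; cases hx
    rw [hf, Option.bind_some] at hx
    rcases hg : (pad g).1 x.2 with _ | b
    · rw [hg] at hx; cases hx
    rw [hg, Option.map_some] at hx
    rcases hf' : (pad f).1 y.1 with _ | a'
    · rw [hf'] at hy; cases hy
    rw [hf', Option.bind_some] at hy
    rcases hg' : (pad g).1 y.2 with _ | b'
    · rw [hg'] at hy; cases hy
    rw [hg', Option.map_some] at hy
    have hz := (Option.some.inj hx).trans (Option.some.inj hy).symm
    have h1 : a = a' := congrArg Prod.fst hz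
    have h2 : b = b' := congrArg Prod.snd hz
    subst h1; subst h2
    have e1 : x.1 = y.1 := (pad f).2 x.1 y.1 a hf hf'
    have e2 : x.2 = y.2 := (pad g).2 x.2 y.2 b hg hg'
    exact Prod.ext e1 e2⟩

lemma pair_val (f : PInj S₁) (g : PInj S₂) (x : Option S₁ × Option S₂) :
    (pair f g).1 x = ((pad f).1 x.1).bind (fun a => ((pad g).1 x.2).map (fun b => (a, b))) :=
  rfl

lemma pair_one : pair (1 : PInj S₁) (1 : PInj S₂) = 1 := by
  apply Subtype.ext; funext x
  rw [pair_val, pad_one, pad_one, one_val, Option.bind_some, one_val, Option.map_some]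
  show some (x.1, x.2) = some x
  rw [Prod.mk.eta]

lemma pair_mul (f f' : PInj S₁) (g g' : PInj S₂) :
    pair (f * f') (g * g') = pair f g * pair f' g' := by
  apply Subtype.ext; funext x
  rw [mul_val, pair_val, pair_val, pad_mul, pad_mul, mul_val, mul_val]
  rcases hf : (pad f).1 x.1 with _ | a
  · simp only [Option.bind_none]
  · simp only [Option.bind_some]
    rcases hg : (pad g).1 x.2 with _ | b
    · simp only [Option.bind_none, Option.map_none]
      rcases hfa : (pad f').1 a with _ | a'
      · simp [hfa]
      · simp [hfa]
    · simp only [Option.map_some, Option.bind_some]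
      rw [pair_val]

lemma pair_word {α : Type} (θ₁ : α → PInj S₁) (θ₂ : α → PInj S₂) (w : List α) :
    (w.map (fun a => pair (θ₁ a) (θ₂ a))).prod
      = pair ((w.map θ₁).prod) ((w.map θ₂).prod) := by
  induction w with
  | nil =>
    simp only [List.map_nil, List.prod_nil]
    exact pair_one.symm
  | cons a w ih =>
    simp only [List.map_cons, List.prod_cons, ih]
    exact (pair_mul _ _ _ _).symm

/-- Extract the first component. -/
def extractL (G : (Option S₁ × Option S₂) → Option (Option S₁ × Option S₂)) :
    S₁ → Option S₁ :=
  fun s => (G (some s, none)).bind (fun y => y.1)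

/-- Extract the second component. -/
def extractR (G : (Option S₁ × Option S₂) → Option (Option S₁ × Option S₂)) :
    S₂ → Option S₂ :=
  fun s => (G (none, some s)).bind (fun y => y.2)

lemma extractL_pair (f : PInj S₁) (g : PInj S₂) :
    extractL (pair f g).1 = f.1 := by
  funext s
  show ((pair f g).1 (some s, none)).bind (fun y => y.1) = f.1 s
  rw [pair_val]
  dsimp only
  rcases hf : f.1 s with _ | t
  · have h1 : (pad f).1 (some s) = none := by
      rw [pad_val_some, hf, Option.map_none]
    rw [h1, Option.bind_none, Option.bind_none]
  · have h1 : (pad f).1 (some s) = some (some t) := by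
      rw [pad_val_some, hf, Option.map_some]
    rw [h1, Option.bind_some, pad_val_none, Option.map_some, Option.bind_some]

lemma extractR_pair (f : PInj S₁) (g : PInj S₂) :
    extractR (pair f g).1 = g.1 := by
  funext s
  show ((pair f g).1 (none, some s)).bind (fun y => y.2) = g.1 s
  rw [pair_val]
  dsimp only
  rw [pad_val_none, Option.bind_some]
  rcases hg : g.1 s with _ | t
  · have h2 : (pad g).1 (some s) = none := by
      rw [pad_val_some, hg, Option.map_none]
    rw [h2, Option.map_none, Option.bind_none]
  · have h2 : (pad g).1 (some s) = some (some t) := by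
      rw [pad_val_some, hg, Option.map_some]
    rw [h2, Option.map_some, Option.bind_some]

end Pair

section Pi

variable {ι : Type} {F : ι → Type}

open Classical in
/-- The product of a family of partial injections, as a partial map. -/
noncomputable def piApp (f : ∀ i, PInj (F i)) (x : ∀ i, F i) : Option (∀ i, F i) :=
  if h : ∀ i, ((f i).1 (x i)).isSome
    then some (fun i => ((f i).1 (x i)).get (h i)) else none

lemma piApp_eq_some_iff {f : ∀ i, PInj (F i)} {x z : ∀ i, F i} :
    piApp f x = some z ↔ ∀ i, (f i).1 (x i) = some (z i) := by
  unfold piApp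
  split
  case isTrue h =>
    constructor
    · intro hz i
      have := congrFun (Option.some.inj hz) i
      rw [← this, Option.some_get]
    · intro hz
      congr 1
      funext i
      have := hz i
      apply Option.some.inj
      rw [Option.some_get, this]
  case isFalse h =>
    constructor
    · intro hz; cases hz
    · intro hz
      exact absurd (fun i => by rw [hz i]; rfl) h

lemma piApp_eq_none_iff {f : ∀ i, PInj (F i)} {x : ∀ i, F i} :
    piApp f x = none ↔ ∃ i, (f i).1 (x i) = none := by
  unfold piApp
  split
  case isTrue h =>
    constructor
    · intro hz; cases hz
    · rintro ⟨i, hi⟩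
      have := h i
      rw [hi] at this; cases this
  case isFalse h =>
    constructor
    · intro _
      push_neg at h
      obtain ⟨i, hi⟩ := h
      exact ⟨i, Option.not_isSome_iff_eq_none.mp hi⟩
    · intro _; rfl

/-- The product of a family of partial injections. -/
noncomputable def pi (f : ∀ i, PInj (F i)) : PInj (∀ i, F i) :=
  ⟨piApp f, by
    intro x y z hx hy
    rw [piApp_eq_some_iff] at hx hy
    funext i
    exact (f i).2 (x i) (y i) (z i) (hx i) (hy i)⟩

@[simp] lemma pi_val (f : ∀ i, PInj (F i)) : (pi f).1 = piApp f := rfl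

lemma pi_one : pi (1 : ∀ i, PInj (F i)) = 1 := by
  apply Subtype.ext; funext x
  exact piApp_eq_some_iff.mpr fun i => rfl

lemma pi_mul (f g : ∀ i, PInj (F i)) : pi (f * g) = pi f * pi g := by
  apply Subtype.ext; funext x
  show piApp (fun i => f i * g i) x = (piApp f x).bind (piApp g)
  rcases hfg : piApp (fun i => f i * g i) x with _ | z
  · rw [piApp_eq_none_iff] at hfg
    obtain ⟨i, hi⟩ := hfg
    rw [mul_val] at hi
    rcases hf : (f i).1 (x i) with _ | u
    · rw [piApp_eq_none_iff.mpr ⟨i, hf⟩]; rfl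
    · rw [hf, Option.bind_some] at hi
      rcases hPf : piApp f x with _ | y
      · rfl
      · rw [Option.bind_some]
        have hyi := piApp_eq_some_iff.mp hPf i
        rw [hf] at hyi
        have huy : u = y i := Option.some.inj hyi
        exact (piApp_eq_none_iff.mpr ⟨i, by rw [← huy]; exact hi⟩).symm
  · have hfg' := piApp_eq_some_iff.mp hfg
    have hcomp : ∀ i, ∃ u, (f i).1 (x i) = some u ∧ (g i).1 u = some (z i) := by
      intro i
      have hi := hfg' i
      rw [mul_val] at hi
      rcases hfi : (f i).1 (x i) with _ | u
      · rw [hfi] at hi; cases hi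
      · rw [hfi, Option.bind_some] at hi; exact ⟨u, rfl, hi⟩
    choose u hu1 hu2 using hcomp
    rw [piApp_eq_some_iff.mpr hu1, Option.bind_some]
    exact (piApp_eq_some_iff.mpr hu2).symm

variable [DecidableEq ι]

/-- Extraction of one coordinate from a product of padded partial injections. -/
noncomputable def extract (i : ι) (G : (∀ j, Option (F j)) → Option (∀ j, Option (F j))) :
    F i → Option (F i) :=
  fun s => (G (Function.update (fun j => (none : Option (F j))) i (some s))).bind
    (fun t => t i)

lemma extract_pi_pad (σ : ∀ j, PInj (F j)) (i : ι) :
    extract i (pi fun j => pad (σ j)).1 = (σ i).1 := by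
  funext s
  unfold extract
  rcases hσ : (σ i).1 s with _ | t
  · have hnone : (pi fun j => pad (σ j)).1
        (Function.update (fun j => (none : Option (F j))) i (some s)) = none := by
      rw [pi_val]
      apply piApp_eq_none_iff.mpr
      refine ⟨i, ?_⟩
      rw [Function.update_self]
      show (pad (σ i)).1 (some s) = none
      rw [pad_val_some, hσ]; rfl
    rw [hnone]; rfl
  · have hsome : (pi fun j => pad (σ j)).1
        (Function.update (fun j => (none : Option (F j))) i (some s)) =
        some (Function.update (fun j => (none : Option (F j))) i (some t)) := by
      rw [pi_val]
      apply piApp_eq_some_iff.mpr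
      intro j
      by_cases hj : j = i
      · subst hj
        rw [Function.update_self, Function.update_self]
        show (pad (σ j)).1 (some s) = some (some t)
        rw [pad_val_some, hσ]; rfl
      · rw [Function.update_of_ne hj, Function.update_of_ne hj]
        rfl
    rw [hsome, Option.bind_some, Function.update_self]

end Pi

end PInj

section RingLemmas

variable {R : Type} [CommRing R] [Fintype R]

lemma pow_stable {s : R} {i p : ℕ} (h : s ^ i = s ^ (i + p)) :
    ∀ (t k : ℕ), i ≤ k → s ^ k = s ^ (k + t * p) := by
  intro t
  induction t with
  | zero => simp
  | succ t ih =>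
    intro k hk
    have hstep : s ^ (k + t * p) = s ^ (k + t * p + p) := by
      have h1 : s ^ (k + t * p) = s ^ (k + t * p - i) * s ^ i := by
        rw [← pow_add]; congr 1; omega
      rw [h1, h, ← pow_add]
      congr 1; omega
    rw [ih k hk, hstep]
    congr 1; ring

lemma exists_pow_idem (s : R) :
    ∃ m : ℕ, 0 < m ∧ s ^ m * s ^ m = s ^ m := by
  have key : ∀ i j : ℕ, i < j → s ^ i = s ^ j →
      ∃ m : ℕ, 0 < m ∧ s ^ m * s ^ m = s ^ m := by
    intro i j hlt hpow
    set p := j - i with hp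
    have hp0 : 0 < p := by omega
    have hij : s ^ i = s ^ (i + p) := by rw [hpow]; congr 1; omega
    refine ⟨p * (i + 1), by positivity, ?_⟩
    rw [← pow_add]
    have hk : i ≤ p * (i + 1) := by
      have h1 : 1 * (i + 1) ≤ p * (i + 1) := Nat.mul_le_mul_right _ hp0
      omega
    have h2 := pow_stable hij (i + 1) (p * (i + 1)) hk
    have h3 : p * (i + 1) + (i + 1) * p = p * (i + 1) + p * (i + 1) := by ring
    rw [h3] at h2
    exact h2.symm
  obtain ⟨i, j, hij, hpow⟩ := Finite.exists_ne_map_eq_of_infinite (fun k : ℕ => s ^ k)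
  rcases lt_trichotomy i j with h | h | h
  · exact key i j h hpow
  · exact absurd h hij
  · exact key j i h hpow.symm

lemma nonunit_nilpotent (hni : ∀ e : R, e * e = e → e = 0 ∨ e = 1)
    (s : R) (hs : ¬ IsUnit s) : ∃ m : ℕ, 0 < m ∧ s ^ m = 0 := by
  obtain ⟨m, hm, hidem⟩ := exists_pow_idem s
  rcases hni _ hidem with h0 | h1
  · exact ⟨m, hm, h0⟩
  · exfalso
    apply hs
    apply IsUnit.of_mul_eq_one (s ^ (m - 1))
    rw [← pow_succ']
    have : m - 1 + 1 = m := by omega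
    rw [this, h1]

lemma exists_uniform_nilpotent (hni : ∀ e : R, e * e = e → e = 0 ∨ e = 1) :
    ∃ M : ℕ, 0 < M ∧ ∀ s : R, ¬ IsUnit s → s ^ M = 0 := by
  have h2 : ∀ s : R, ∃ m : ℕ, 0 < m ∧ (¬ IsUnit s → s ^ m = 0) := by
    intro s
    by_cases h : IsUnit s
    · exact ⟨1, one_pos, fun hc => absurd h hc⟩
    · obtain ⟨m, hm, h0⟩ := nonunit_nilpotent hni s h
      exact ⟨m, hm, fun _ => h0⟩
  choose f hf0 hf using h2
  refine ⟨∑ s : R, f s, ?_, ?_⟩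
  · calc 0 < f 0 := hf0 0
    _ ≤ ∑ s : R, f s := Finset.single_le_sum (fun s _ => Nat.zero_le (f s)) (Finset.mem_univ 0)
  · intro s hs
    have hle : f s ≤ ∑ s : R, f s :=
      Finset.single_le_sum (fun s _ => Nat.zero_le (f s)) (Finset.mem_univ s)
    calc s ^ (∑ s : R, f s) = s ^ (f s) * s ^ (∑ s : R, f s - f s) := by
          rw [← pow_add]; congr 1; omega
    _ = 0 := by rw [hf s hs, zero_mul]

lemma prod_nonunits_eq_zero {M : ℕ} (hM : ∀ s : R, ¬ IsUnit s → s ^ M = 0)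
    (l : List R) (hl : ∀ x ∈ l, ¬ IsUnit x)
    (hlen : Fintype.card R * M + 1 ≤ l.length) : l.prod = 0 := by
  classical
  have hcount : ∃ s ∈ l, M ≤ l.count s := by
    by_contra hc
    push_neg at hc
    have hbound : l.length ≤ Fintype.card R * M := by
      have h1 : l.length = ∑ a ∈ l.toFinset, l.count a := by
        have := Multiset.toFinset_sum_count_eq (l : Multiset R)
        simpa using this.symm
      have h2 : ∀ a ∈ l.toFinset, l.count a ≤ M := by
        intro a ha
        have := hc a (List.mem_toFinset.mp ha)
        omega
      calc l.length = ∑ a ∈ l.toFinset, l.count a := h1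
        _ ≤ ∑ _a ∈ l.toFinset, M := Finset.sum_le_sum h2
        _ = l.toFinset.card * M := by rw [Finset.sum_const, smul_eq_mul]
        _ ≤ Fintype.card R * M := by
            exact Nat.mul_le_mul_right _ (Finset.card_le_univ _)
    omega
  obtain ⟨s, hsl, hsc⟩ := hcount
  have hrep : Multiset.replicate M s ≤ (l : Multiset R) := by
    apply Multiset.le_count_iff_replicate_le.mp
    simpa using hsc
  have hdvd : s ^ M ∣ l.prod := by
    have := Multiset.prod_dvd_prod_of_le hrep
    rw [Multiset.prod_replicate] at this
    simpa using this
  rw [hM s (hl s hsl)] at hdvd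
  exact zero_dvd_iff.mp hdvd

end RingLemmas
section LocalMachine

variable {R : Type} [CommRing R] [Fintype R] {α : Type} {n : ℕ}

/-- Non-units of `R`. -/
abbrev NU (R : Type) [CommRing R] : Type := {x : R // ¬ IsUnit x}

/-- Bounded "lists" of non-units: a counter together with a partial assignment
of entries, defined exactly below the counter. -/
abbrev BL (R : Type) [CommRing R] (B : ℕ) : Type :=
  {lg : Fin B × (Fin B → Option (NU R)) //
    ∀ j : Fin B, (lg.2 j).isSome ↔ (j : ℕ) < (lg.1 : ℕ)}

/-- Machine states. -/
abbrev MS (R : Type) [CommRing R] (n B : ℕ) : Type := Fin n × Rˣ × BL R B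

variable {B : ℕ}

/-- The empty bounded list. -/
def emptyB (hB : 0 < B) : BL R B := ⟨(⟨0, hB⟩, fun _ => none), by intro j; simp⟩

/-- The entries of a bounded list, with `1` in unused positions. -/
def valsB (l : BL R B) : Fin B → R := fun j => ((l.1.2 j).elim 1 Subtype.val)

/-- Product of the entries of a bounded list. -/
def prodB (l : BL R B) : R := ∏ j, valsB l j

lemma valsB_nonunit {l : BL R B} {j : Fin B} (hj : (j : ℕ) < (l.1.1 : ℕ)) :
    ¬ IsUnit (valsB l j) := by
  have hs : (l.1.2 j).isSome := (l.2 j).mpr hj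
  rcases ho : l.1.2 j with _ | u
  · rw [ho] at hs; cases hs
  · have : valsB l j = u.1 := by simp [valsB, ho]
    rw [this]
    exact u.2

lemma valsB_one {l : BL R B} {j : Fin B} (hj : ¬ (j : ℕ) < (l.1.1 : ℕ)) :
    valsB l j = 1 := by
  have hs : ¬ (l.1.2 j).isSome := fun hc => hj ((l.2 j).mp hc)
  rcases ho : l.1.2 j with _ | u
  · rw [valsB, ho]; rfl
  · rw [ho] at hs; simp at hs

lemma prodB_empty (hB : 0 < B) : prodB (emptyB (R := R) hB) = 1 := by
  unfold prodB valsB emptyB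
  simp

/-- Appending to a bounded list. -/
def snocB (l : BL R B) (x : NU R) : Option (BL R B) :=
  if h : (l.1.1 : ℕ) + 1 < B then
    some ⟨(⟨(l.1.1 : ℕ) + 1, h⟩, Function.update l.1.2 l.1.1 (some x)), by
      intro j
      dsimp only
      by_cases hj : j = l.1.1
      · subst hj
        rw [Function.update_self]
        simp
      · rw [Function.update_of_ne hj, l.2 j]
        have : (j : ℕ) ≠ (l.1.1 : ℕ) := fun hc => hj (Fin.ext hc)
        omega⟩
  else none

lemma snocB_len {l : BL R B} {x : NU R} (h : snocB l x = none) :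
    (l.1.1 : ℕ) + 1 = B := by
  unfold snocB at h
  split at h
  case isTrue => cases h
  case isFalse hlt => have := l.1.1.2; omega

lemma snocB_some {l : BL R B} {x : NU R} {l' : BL R B} (h : snocB l x = some l') :
    (l'.1.1 : ℕ) = (l.1.1 : ℕ) + 1 ∧
      l'.1.2 = Function.update l.1.2 l.1.1 (some x) := by
  unfold snocB at h
  split at h
  case isFalse => cases h
  case isTrue hlt =>
    have := Option.some.inj h
    subst this
    exact ⟨rfl, rfl⟩

lemma top_none (l : BL R B) : l.1.2 l.1.1 = none := by
  have h := l.2 l.1.1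
  rcases ho : l.1.2 l.1.1 with _ | u
  · rfl
  · rw [ho] at h; simp at h

lemma prodB_snoc {l : BL R B} {x : NU R} {l' : BL R B}
    (h : snocB l x = some l') : prodB l' = prodB l * x.1 := by
  classical
  obtain ⟨hk, hg⟩ := snocB_some h
  have hvals : valsB l' = Function.update (valsB l) l.1.1 x.1 := by
    funext j
    unfold valsB
    rw [hg]
    by_cases hj : j = l.1.1
    · subst hj
      rw [Function.update_self, Function.update_self]
      rfl
    · rw [Function.update_of_ne hj, Function.update_of_ne hj]
  have h1 : prodB l' = x.1 * ∏ j ∈ Finset.univ \ {l.1.1}, valsB l j := by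
    rw [prodB, hvals]
    exact Finset.prod_update_of_mem (Finset.mem_univ _) _ _
  have h2 : prodB l = valsB l l.1.1 * ∏ j ∈ Finset.univ \ {l.1.1}, valsB l j := by
    rw [← Finset.erase_eq]
    exact (Finset.mul_prod_erase Finset.univ (valsB l) (Finset.mem_univ _)).symm
  have h3 : valsB l l.1.1 = 1 := valsB_one (by omega)
  rw [h1, h2, h3, one_mul]
  ring

lemma snocB_inj {l₁ l₂ : BL R B} {x : NU R} {m : BL R B}
    (h₁ : snocB l₁ x = some m) (h₂ : snocB l₂ x = some m) : l₁ = l₂ := by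
  obtain ⟨hk₁, hg₁⟩ := snocB_some h₁
  obtain ⟨hk₂, hg₂⟩ := snocB_some h₂
  have hkk : (l₁.1.1 : ℕ) = (l₂.1.1 : ℕ) := by omega
  have hfin : l₁.1.1 = l₂.1.1 := Fin.ext hkk
  classical
  apply Subtype.ext
  apply Prod.ext hfin
  funext j
  by_cases hj : j = l₁.1.1
  · subst hj
    have e₁ : l₁.1.2 l₁.1.1 = none := top_none l₁
    have e₂ : l₂.1.2 l₁.1.1 = none := by rw [hfin]; exact top_none l₂
    rw [e₁, e₂]
  · have := congrFun (hg₁.symm.trans hg₂) j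
    rw [Function.update_of_ne hj, Function.update_of_ne (by rw [← hfin]; exact hj)] at this
    exact this

variable (tr : α → Matrix (Fin n) (Fin n) R)

open Classical in
noncomputable def nxt (a : α) (q : Fin n) : Option (Fin n) :=
  if h : ∃ q', tr a q q' ≠ 0 then some h.choose else none

lemma nxt_spec {a : α} {q q' : Fin n} (h : nxt tr a q = some q') : tr a q q' ≠ 0 := by
  unfold nxt at h
  split at h
  case isTrue hex => cases h; exact hex.choose_spec
  case isFalse => cases h

lemma nxt_none {a : α} {q : Fin n} (h : nxt tr a q = none) (q' : Fin n) :
    tr a q q' = 0 := by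
  unfold nxt at h
  split at h
  case isTrue hex => cases h
  case isFalse hex => by_contra hc; exact hex ⟨q', hc⟩

open Classical in
noncomputable def mstep (hcol : ∀ a, RevWA.colOk (tr a)) (B : ℕ) (a : α) :
    PInj (MS R n B) :=
  ⟨fun s => (nxt tr a s.1).bind (fun q' =>
      if hu : IsUnit (tr a s.1 q') then some (q', s.2.1 * hu.unit, s.2.2)
      else (snocB s.2.2 ⟨tr a s.1 q', hu⟩).map fun l' => (q', s.2.1, l')), by
    intro s₁ s₂ z h₁ h₂
    dsimp only at h₁ h₂
    rcases hn₁ : nxt tr a s₁.1 with _ | q₁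
    · rw [hn₁] at h₁; cases h₁
    rw [hn₁, Option.bind_some] at h₁
    rcases hn₂ : nxt tr a s₂.1 with _ | q₂
    · rw [hn₂] at h₂; cases h₂
    rw [hn₂, Option.bind_some] at h₂
    have hz₁ : z.1 = q₁ := by
      split at h₁
      · exact (congrArg Prod.fst (Option.some.inj h₁)).symm
      · rcases hsn : snocB s₁.2.2 _ with _ | l'
        · rw [hsn] at h₁; cases h₁
        · rw [hsn] at h₁
          exact (congrArg Prod.fst (Option.some.inj h₁)).symm
    have hz₂ : z.1 = q₂ := by
      split at h₂
      · exact (congrArg Prod.fst (Option.some.inj h₂)).symm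
      · rcases hsn : snocB s₂.2.2 _ with _ | l'
        · rw [hsn] at h₂; cases h₂
        · rw [hsn] at h₂
          exact (congrArg Prod.fst (Option.some.inj h₂)).symm
    have hq : s₁.1 = s₂.1 := by
      apply hcol a s₁.1 s₂.1 z.1
      · rw [hz₁]; exact nxt_spec tr hn₁
      · rw [hz₂]; exact nxt_spec tr hn₂
    rw [← hz₂, ← hq] at h₂
    rw [← hz₁] at h₁
    split at h₁
    case isTrue hu =>
      rw [dif_pos hu] at h₂
      have e := (Option.some.inj h₁).trans (Option.some.inj h₂).symm
      have eu : s₁.2.1 * hu.unit = s₂.2.1 * hu.unit := congrArg (fun t => t.2.1) e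
      have hu' : s₁.2.1 = s₂.2.1 := mul_right_cancel eu
      have hl : s₁.2.2 = s₂.2.2 := congrArg (fun t => t.2.2) e
      exact Prod.ext hq (Prod.ext hu' hl)
    case isFalse hu =>
      rw [dif_neg hu] at h₂
      rcases hsn₁ : snocB s₁.2.2 ⟨tr a s₁.1 z.1, hu⟩ with _ | m₁
      · rw [hsn₁] at h₁; cases h₁
      rw [hsn₁] at h₁
      rcases hsn₂ : snocB s₂.2.2 ⟨tr a s₁.1 z.1, hu⟩ with _ | m₂
      · rw [hsn₂] at h₂; cases h₂
      rw [hsn₂] at h₂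
      have e := (Option.some.inj h₁).trans (Option.some.inj h₂).symm
      have hu' : s₁.2.1 = s₂.2.1 := congrArg (fun t => t.2.1) e
      have hm : m₁ = m₂ := congrArg (fun t => t.2.2) e
      subst hm
      have hl : s₁.2.2 = s₂.2.2 := snocB_inj hsn₁ hsn₂
      exact Prod.ext hq (Prod.ext hu' hl)⟩

open Classical in
lemma mstep_val (hcol : ∀ a, RevWA.colOk (tr a)) (B : ℕ) (a : α) (s : MS R n B) :
    (mstep tr hcol B a).1 s = (nxt tr a s.1).bind (fun q' =>
      if hu : IsUnit (tr a s.1 q') then some (q', s.2.1 * hu.unit, s.2.2)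
      else (snocB s.2.2 ⟨tr a s.1 q', hu⟩).map fun l' => (q', s.2.1, l')) := rfl

lemma machine_inv (hB : 0 < B)
    (hcol : ∀ a, RevWA.colOk (tr a)) (hrow : ∀ a, RevWA.rowOk (tr a))
    (hov : ∀ (l : BL R B) (t : R), ¬ IsUnit t → (l.1.1 : ℕ) + 1 = B →
      prodB l * t = 0)
    (w : List α) (p : Fin n) :
    (∀ z : MS R n B,
        ((w.map (mstep tr hcol B)).prod).1 (p, 1, emptyB hB) = some z →
        ∀ q, ((w.map tr).prod) p q =
          if q = z.1 then (z.2.1 : R) * prodB z.2.2 else 0) ∧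
      (((w.map (mstep tr hcol B)).prod).1 (p, 1, emptyB hB) = none →
        ∀ q, ((w.map tr).prod) p q = 0) := by
  classical
  induction w using List.reverseRecOn with
  | nil =>
    constructor
    · intro z hz q
      simp only [List.map_nil, List.prod_nil, PInj.one_val] at hz ⊢
      have := Option.some.inj hz
      subst this
      rw [prodB_empty]
      show (1 : Matrix (Fin n) (Fin n) R) p q = _
      rw [Matrix.one_apply]
      by_cases h : q = p
      · subst h; simp
      · rw [if_neg (fun hc : p = q => h hc.symm), if_neg (fun hc : q = p => h hc)]
    · intro hz
      simp only [List.map_nil, List.prod_nil, PInj.one_val] at hz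
      cases hz
  | append_singleton w a ih =>
    have hprodm : ((w ++ [a]).map (mstep tr hcol B)).prod
        = ((w.map (mstep tr hcol B)).prod) * mstep tr hcol B a := by
      rw [List.map_append, List.prod_append]
      simp
    have hprodt : ((w ++ [a]).map tr).prod = ((w.map tr).prod) * tr a := by
      rw [List.map_append, List.prod_append]
      simp
    rcases hW : ((w.map (mstep tr hcol B)).prod).1 (p, 1, emptyB hB) with _ | y
    · have hrow0 : ∀ q, ((w.map tr).prod) p q = 0 := ih.2 hW
      have hnew : (((w ++ [a]).map (mstep tr hcol B)).prod).1 (p, 1, emptyB hB)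
          = none := by
        rw [hprodm, PInj.mul_val, hW]; rfl
      constructor
      · intro z hz; rw [hnew] at hz; cases hz
      · intro _ q
        rw [hprodt, Matrix.mul_apply]
        apply Finset.sum_eq_zero
        intro k _
        rw [hrow0 k, zero_mul]
    · have hrowy : ∀ q, ((w.map tr).prod) p q =
          if q = y.1 then (y.2.1 : R) * prodB y.2.2 else 0 := ih.1 y hW
      have hnew : (((w ++ [a]).map (mstep tr hcol B)).prod).1 (p, 1, emptyB hB)
          = (mstep tr hcol B a).1 y := by
        rw [hprodm, PInj.mul_val, hW, Option.bind_some]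
      have hMq : ∀ q, (((w ++ [a]).map tr).prod) p q
          = ((y.2.1 : R) * prodB y.2.2) * tr a y.1 q := by
        intro q
        rw [hprodt, Matrix.mul_apply]
        have hterm : ∀ k ∈ Finset.univ, ((w.map tr).prod) p k * tr a k q
            = if k = y.1 then ((y.2.1 : R) * prodB y.2.2) * tr a k q else 0 := by
          intro k _
          rw [hrowy k, ite_mul, zero_mul]
        rw [Finset.sum_congr rfl hterm, Finset.sum_ite_eq' Finset.univ y.1
          (fun k => ((y.2.1 : R) * prodB y.2.2) * tr a k q)]
        simp
      rcases hn : nxt tr a y.1 with _ | q'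
      · have hnew2 : (((w ++ [a]).map (mstep tr hcol B)).prod).1 (p, 1, emptyB hB)
            = none := by rw [hnew, mstep_val, hn]; rfl
        constructor
        · intro z hz; rw [hnew2] at hz; cases hz
        · intro _ q
          rw [hMq q, nxt_none tr hn q, mul_zero]
      · have ht : tr a y.1 q' ≠ 0 := nxt_spec tr hn
        have hzero : ∀ q, q ≠ q' → tr a y.1 q = 0 := by
          intro q hq
          by_contra hc
          exact hq (hrow a y.1 q q' hc ht)
        have hMq' : ∀ q, (((w ++ [a]).map tr).prod) p q
            = if q = q' then ((y.2.1 : R) * prodB y.2.2) * tr a y.1 q' else 0 := by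
          intro q
          rw [hMq q]
          by_cases hq : q = q'
          · subst hq; rw [if_pos rfl]
          · rw [if_neg hq, hzero q hq, mul_zero]
        by_cases hu : IsUnit (tr a y.1 q')
        · have hnew2 : (((w ++ [a]).map (mstep tr hcol B)).prod).1 (p, 1, emptyB hB)
              = some (q', y.2.1 * hu.unit, y.2.2) := by
            rw [hnew, mstep_val, hn]
            simp only [Option.bind_some]
            rw [dif_pos hu]
          constructor
          · intro z hz q
            rw [hnew2] at hz
            have := Option.some.inj hz
            subst this
            rw [hMq' q]
            by_cases hq : q = q'
            · subst hq
              rw [if_pos rfl, if_pos rfl, Units.val_mul, IsUnit.unit_spec]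
              ring
            · rw [if_neg hq, if_neg hq]
          · intro hz; rw [hnew2] at hz; cases hz
        · rcases hsn : snocB y.2.2 ⟨tr a y.1 q', hu⟩ with _ | l'
          · have hnew2 : (((w ++ [a]).map (mstep tr hcol B)).prod).1 (p, 1, emptyB hB)
                = none := by
              rw [hnew, mstep_val, hn]
              simp only [Option.bind_some]
              rw [dif_neg hu, hsn]
              rfl
            have hval0 : prodB y.2.2 * tr a y.1 q' = 0 :=
              hov y.2.2 _ hu (snocB_len hsn)
            constructor
            · intro z hz; rw [hnew2] at hz; cases hz
            · intro _ q
              rw [hMq' q]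
              by_cases hq : q = q'
              · subst hq
                rw [if_pos rfl, mul_assoc, hval0, mul_zero]
              · rw [if_neg hq]
          · have hnew2 : (((w ++ [a]).map (mstep tr hcol B)).prod).1 (p, 1, emptyB hB)
                = some (q', y.2.1, l') := by
              rw [hnew, mstep_val, hn]
              simp only [Option.bind_some]
              rw [dif_neg hu, hsn]
              rfl
            constructor
            · intro z hz q
              rw [hnew2] at hz
              have := Option.some.inj hz
              subst this
              rw [hMq' q]
              by_cases hq : q = q'
              · subst hq
                rw [if_pos rfl, if_pos rfl, prodB_snoc hsn]
                ring
              · rw [if_neg hq, if_neg hq]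
            · intro hz; rw [hnew2] at hz; cases hz

end LocalMachine
section LocalFactor

variable {R : Type} [CommRing R] [Fintype R] {α : Type} {n : ℕ}

open Classical in
lemma prod_eq_zero_of_many_nonunits {M : ℕ}
    (hM : ∀ s : R, ¬ IsUnit s → s ^ M = 0) {ι : Type} [Fintype ι] [DecidableEq ι]
    (v : ι → R)
    (hcard : Fintype.card R * M + 1 ≤
      (Finset.univ.filter (fun j => ¬ IsUnit (v j))).card) :
    ∏ j, v j = 0 := by
  classical
  set T := Finset.univ.filter (fun j => ¬ IsUnit (v j)) with hT
  suffices h : ∏ j ∈ T, v j = 0 by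
    rw [← Finset.prod_filter_mul_prod_filter_not Finset.univ
      (fun j => ¬ IsUnit (v j)) v, ← hT, h, zero_mul]
  have hfib : ∃ r ∈ T.image v, M ≤ (T.filter (fun j => v j = r)).card := by
    by_contra hc
    push_neg at hc
    have hsum : T.card = ∑ r ∈ T.image v, (T.filter (fun j => v j = r)).card :=
      Finset.card_eq_sum_card_fiberwise (fun j hj => Finset.mem_image_of_mem v hj)
    have hle : T.card ≤ (T.image v).card * M := by
      rw [hsum]
      calc ∑ r ∈ T.image v, (T.filter (fun j => v j = r)).card
          ≤ ∑ _r ∈ T.image v, M := Finset.sum_le_sum (fun r hr => by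
            have := hc r hr; omega)
        _ = (T.image v).card * M := by rw [Finset.sum_const, smul_eq_mul]
    have himg : (T.image v).card ≤ Fintype.card R := Finset.card_le_univ _
    have := Nat.mul_le_mul_right M himg
    omega
  obtain ⟨r, hr, hrM⟩ := hfib
  obtain ⟨j₀, hj₀, hv₀⟩ := Finset.mem_image.mp hr
  have hrnu : ¬ IsUnit r := by
    rw [← hv₀]
    exact (Finset.mem_filter.mp hj₀).2
  set F := T.filter (fun j => v j = r) with hF
  have hprodF : ∏ j ∈ F, v j = r ^ F.card := by
    rw [Finset.prod_congr rfl (fun j hj => (Finset.mem_filter.mp hj).2),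
      Finset.prod_const]
  have hr0 : r ^ F.card = 0 := by
    have : r ^ F.card = r ^ M * r ^ (F.card - M) := by
      rw [← pow_add]; congr 1; omega
    rw [this, hM r hrnu, zero_mul]
  rw [← Finset.prod_filter_mul_prod_filter_not T (fun j => v j = r) v, ← hF,
    hprodF, hr0, zero_mul]

/-- Factorization for finite commutative rings with no nontrivial idempotents. -/
lemma local_factor (hni : ∀ e : R, e * e = e → e = 0 ∨ e = 1)
    (tr : α → Matrix (Fin n) (Fin n) R)
    (htr : ∀ a, RevWA.rowOk (tr a) ∧ RevWA.colOk (tr a)) :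
    ∃ (S : Type) (_ : Fintype S) (θ : α → PInj S)
      (K : (S → Option S) → Matrix (Fin n) (Fin n) R),
      ∀ w : List α, (w.map tr).prod = K (((w.map θ).prod).1) := by
  classical
  obtain ⟨M, hM0, hM⟩ := exists_uniform_nilpotent hni
  set B := Fintype.card R * M + 1 with hBdef
  have hB : 0 < B := Nat.succ_pos _
  have hov : ∀ (l : BL R B) (t : R), ¬ IsUnit t → (l.1.1 : ℕ) + 1 = B →
      prodB l * t = 0 := by
    intro l t hu hlen
    have h1 : prodB l * t = ∏ j : Fin (B + 1), (Fin.snoc (valsB l) t : Fin (B+1) → R) j := by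
      rw [Fin.prod_univ_castSucc]
      simp only [Fin.snoc_castSucc, Fin.snoc_last]
      rfl
    rw [h1]
    apply prod_eq_zero_of_many_nonunits hM
    -- at most one unit position
    have hone : (Finset.univ.filter
        (fun j : Fin (B+1) => IsUnit ((Fin.snoc (valsB l) t : Fin (B+1) → R) j))).card ≤ 1 := by
      apply Finset.card_le_one.mpr
      intro a ha b hb
      have key : ∀ c : Fin (B+1),
          IsUnit ((Fin.snoc (valsB l) t : Fin (B+1) → R) c) →
          c = Fin.castSucc ⟨B - 1, by omega⟩ := by
        intro c hc
        rcases Fin.eq_castSucc_or_eq_last c with ⟨j, hj⟩ | hj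
        · subst hj
          rw [Fin.snoc_castSucc] at hc
          by_cases hjk : (j : ℕ) < (l.1.1 : ℕ)
          · exact absurd hc (valsB_nonunit hjk)
          · have : (j : ℕ) = B - 1 := by have := j.2; omega
            congr 1
            exact Fin.ext this
        · subst hj
          rw [Fin.snoc_last] at hc
          exact absurd hc hu
      rw [key a (Finset.mem_filter.mp ha).2, key b (Finset.mem_filter.mp hb).2]
    have htot := Finset.card_filter_add_card_filter_not
      (s := (Finset.univ : Finset (Fin (B+1))))
      (p := fun j => IsUnit ((Fin.snoc (valsB l) t : Fin (B+1) → R) j))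
    rw [Finset.card_univ, Fintype.card_fin] at htot
    omega
  haveI : Fintype (MS R n B) := Fintype.ofFinite _
  refine ⟨MS R n B, inferInstance, fun a => mstep tr (fun a => (htr a).2) B a,
    fun g => Matrix.of fun p q => (g (p, 1, emptyB hB)).elim 0
      (fun z => if q = z.1 then (z.2.1 : R) * prodB z.2.2 else 0), ?_⟩
  intro w
  ext p q
  have hinv := machine_inv tr hB (fun a => (htr a).2) (fun a => (htr a).1) hov w p
  dsimp only [Matrix.of_apply]
  rcases hg : ((w.map fun a => mstep tr (fun a => (htr a).2) B a).prod).1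
      (p, 1, emptyB hB) with _ | z
  · exact hinv.2 hg q
  · exact hinv.1 z hg q

end LocalFactor
section Factorization

/-- Factorization of the word-matrix function of a reversible automaton over a
finite commutative ring through a morphism into partial injections. -/
theorem factor_all : ∀ (N : ℕ) (R : Type) (_ : CommRing R) (_ : Fintype R),
    Fintype.card R ≤ N → ∀ {α : Type} {n : ℕ} (tr : α → Matrix (Fin n) (Fin n) R),
    (∀ a, RevWA.rowOk (tr a) ∧ RevWA.colOk (tr a)) →
    ∃ (S : Type) (_ : Fintype S) (θ : α → PInj S)
      (K : (S → Option S) → Matrix (Fin n) (Fin n) R),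
      ∀ w : List α, (w.map tr).prod = K (((w.map θ).prod).1) := by
  intro N
  induction N with
  | zero =>
    intro R _ _ hcard
    exact absurd hcard (by have := Fintype.card_pos (α := R); omega)
  | succ N IH =>
    intro R instR instF hcard α n tr htr
    by_cases hsplit : ∃ e : R, e * e = e ∧ e ≠ 0 ∧ e ≠ 1
    · obtain ⟨e, he, he0, he1⟩ := hsplit
      classical
      set I₁ : Ideal R := Ideal.span {e} with hI₁
      set I₂ : Ideal R := Ideal.span {1 - e} with hI₂
      have hco : IsCoprime I₁ I₂ := by
        rw [Ideal.isCoprime_iff_exists]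
        exact ⟨e, Ideal.mem_span_singleton_self e, 1 - e,
          Ideal.mem_span_singleton_self _, by ring⟩
      have hbot : I₁ ⊓ I₂ = ⊥ := by
        apply le_antisymm
        · intro x hx
          obtain ⟨hx₁, hx₂⟩ := Ideal.mem_inf.mp hx
          rw [hI₁, Ideal.mem_span_singleton'] at hx₁
          rw [hI₂, Ideal.mem_span_singleton'] at hx₂
          obtain ⟨a, ha⟩ := hx₁
          obtain ⟨b, hb⟩ := hx₂
          have hx0 : x = 0 := by
            have h1 : x * e = 0 := by
              calc x * e = b * (e - e * e) := by rw [← hb]; ring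
              _ = 0 := by rw [he]; ring
            have h2 : x * (1 - e) = 0 := by
              calc x * (1 - e) = a * (e - e * e) := by rw [← ha]; ring
              _ = 0 := by rw [he]; ring
            calc x = x * e + x * (1 - e) := by ring
            _ = 0 := by rw [h1, h2]; ring
          simp [hx0]
        · exact bot_le
      let ψ : R ≃+* (R ⧸ I₁) × (R ⧸ I₂) :=
        ((RingEquiv.quotientBot R).symm.trans (Ideal.quotEquivOfEq hbot.symm)).trans
          (Ideal.quotientInfEquivQuotientProd I₁ I₂ hco)
      haveI : Finite (R ⧸ I₁) := Finite.of_surjective _ Ideal.Quotient.mk_surjective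
      haveI : Finite (R ⧸ I₂) := Finite.of_surjective _ Ideal.Quotient.mk_surjective
      haveI fq₁ : Fintype (R ⧸ I₁) := Fintype.ofFinite _
      haveI fq₂ : Fintype (R ⧸ I₂) := Fintype.ofFinite _
      have hnt₁ : Nontrivial (R ⧸ I₁) := by
        apply Ideal.Quotient.nontrivial_iff.mpr
        intro hc
        rw [hI₁, Ideal.span_singleton_eq_top] at hc
        obtain ⟨u, hu⟩ := hc
        have huu : u * u = u := Units.ext (by rw [Units.val_mul, hu, he])
        have hu1 : u = 1 := by
          have : u * u = 1 * u := by rw [huu, one_mul]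
          exact mul_right_cancel this
        apply he1
        rw [← hu, hu1, Units.val_one]
      have hnt₂ : Nontrivial (R ⧸ I₂) := by
        apply Ideal.Quotient.nontrivial_iff.mpr
        intro hc
        rw [hI₂, Ideal.span_singleton_eq_top] at hc
        obtain ⟨u, hu⟩ := hc
        have hee : (1 - e) * (1 - e) = 1 - e := by linear_combination he
        have huu : u * u = u := Units.ext (by rw [Units.val_mul, hu, hee])
        have hu1 : u = 1 := by
          have : u * u = 1 * u := by rw [huu, one_mul]
          exact mul_right_cancel this
        apply he0
        have : (1 : R) - e = 1 := by rw [← hu, hu1, Units.val_one]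
        linear_combination -this
      have hcards : Fintype.card (R ⧸ I₁) * Fintype.card (R ⧸ I₂) = Fintype.card R := by
        rw [← Fintype.card_prod]
        exact (Fintype.card_congr ψ.toEquiv).symm
      have h2₁ : 2 ≤ Fintype.card (R ⧸ I₁) := Fintype.one_lt_card_iff_nontrivial.mpr hnt₁
      have h2₂ : 2 ≤ Fintype.card (R ⧸ I₂) := Fintype.one_lt_card_iff_nontrivial.mpr hnt₂
      have hcard₁ : Fintype.card (R ⧸ I₁) ≤ N := by
        have hstep : 2 * Fintype.card (R ⧸ I₁) ≤ N + 1 := by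
          calc 2 * Fintype.card (R ⧸ I₁)
              ≤ Fintype.card (R ⧸ I₂) * Fintype.card (R ⧸ I₁) :=
                Nat.mul_le_mul_right _ h2₂
          _ = Fintype.card (R ⧸ I₁) * Fintype.card (R ⧸ I₂) := Nat.mul_comm _ _
          _ = Fintype.card R := hcards
          _ ≤ N + 1 := hcard
        omega
      have hcard₂ : Fintype.card (R ⧸ I₂) ≤ N := by
        have hstep : 2 * Fintype.card (R ⧸ I₂) ≤ N + 1 := by
          calc 2 * Fintype.card (R ⧸ I₂)
              ≤ Fintype.card (R ⧸ I₁) * Fintype.card (R ⧸ I₂) :=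
                Nat.mul_le_mul_right _ h2₁
          _ = Fintype.card R := hcards
          _ ≤ N + 1 := hcard
        omega
      let π₁ : R →+* R ⧸ I₁ := (RingHom.fst _ _).comp ψ.toRingHom
      let π₂ : R →+* R ⧸ I₂ := (RingHom.snd _ _).comp ψ.toRingHom
      have htr₁ : ∀ a, RevWA.rowOk ((tr a).map π₁) ∧ RevWA.colOk ((tr a).map π₁) := by
        intro a
        constructor
        · intro i j j' h h'
          apply (htr a).1 i j j'
          · intro hc; apply h; show π₁ (tr a i j) = 0; rw [hc, map_zero]
          · intro hc; apply h'; show π₁ (tr a i j') = 0; rw [hc, map_zero]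
        · intro i i' j h h'
          apply (htr a).2 i i' j
          · intro hc; apply h; show π₁ (tr a i j) = 0; rw [hc, map_zero]
          · intro hc; apply h'; show π₁ (tr a i' j) = 0; rw [hc, map_zero]
      have htr₂ : ∀ a, RevWA.rowOk ((tr a).map π₂) ∧ RevWA.colOk ((tr a).map π₂) := by
        intro a
        constructor
        · intro i j j' h h'
          apply (htr a).1 i j j'
          · intro hc; apply h; show π₂ (tr a i j) = 0; rw [hc, map_zero]
          · intro hc; apply h'; show π₂ (tr a i j') = 0; rw [hc, map_zero]
        · intro i i' j h h'
          apply (htr a).2 i i' j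
          · intro hc; apply h; show π₂ (tr a i j) = 0; rw [hc, map_zero]
          · intro hc; apply h'; show π₂ (tr a i' j) = 0; rw [hc, map_zero]
      obtain ⟨S₁, fS₁, θ₁, K₁, hK₁⟩ :=
        IH (R ⧸ I₁) _ fq₁ hcard₁ (fun a => (tr a).map π₁) htr₁
      obtain ⟨S₂, fS₂, θ₂, K₂, hK₂⟩ :=
        IH (R ⧸ I₂) _ fq₂ hcard₂ (fun a => (tr a).map π₂) htr₂
      -- combine the two machines
      haveI : Fintype S₁ := fS₁
      haveI : Fintype S₂ := fS₂
      let θ : α → PInj (Option S₁ × Option S₂) := fun a => PInj.pair (θ₁ a) (θ₂ a)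
      refine ⟨Option S₁ × Option S₂, inferInstance, θ,
        fun g => Matrix.of fun p q =>
          ψ.symm (K₁ (PInj.extractL g) p q, K₂ (PInj.extractR g) p q), ?_⟩
      intro w
      ext p q
      dsimp only [Matrix.of_apply]
      have hw : (w.map θ).prod = PInj.pair ((w.map θ₁).prod) ((w.map θ₂).prod) :=
        PInj.pair_word θ₁ θ₂ w
      have he₁ : PInj.extractL ((w.map θ).prod).1 = ((w.map θ₁).prod).1 := by
        rw [hw]; exact PInj.extractL_pair _ _
      have he₂ : PInj.extractR ((w.map θ).prod).1 = ((w.map θ₂).prod).1 := by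
        rw [hw]; exact PInj.extractR_pair _ _
      rw [he₁, he₂, ← hK₁ w, ← hK₂ w]
      have hmap₁ : (w.map (fun a => (tr a).map π₁)).prod = ((w.map tr).prod).map π₁ := by
        have h1 := hom_list_prod (fun m : Matrix (Fin n) (Fin n) R => m.map π₁)
          (Matrix.map_one π₁ (map_zero π₁) (map_one π₁))
          (fun a b => Matrix.map_mul) (w.map tr)
        rw [List.map_map] at h1
        exact h1.symm
      have hmap₂ : (w.map (fun a => (tr a).map π₂)).prod = ((w.map tr).prod).map π₂ := by
        have h1 := hom_list_prod (fun m : Matrix (Fin n) (Fin n) R => m.map π₂)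
          (Matrix.map_one π₂ (map_zero π₂) (map_one π₂))
          (fun a b => Matrix.map_mul) (w.map tr)
        rw [List.map_map] at h1
        exact h1.symm
      rw [hmap₁, hmap₂]
      show ((w.map tr).prod) p q
        = ψ.symm (π₁ (((w.map tr).prod) p q), π₂ (((w.map tr).prod) p q))
      have hpair : (π₁ (((w.map tr).prod) p q), π₂ (((w.map tr).prod) p q))
          = ψ (((w.map tr).prod) p q) := rfl
      rw [hpair, RingEquiv.symm_apply_apply]
    · have hni : ∀ e : R, e * e = e → e = 0 ∨ e = 1 := by
        intro e he
        by_contra hc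
        push_neg at hc
        exact hsplit ⟨e, he, hc.1, hc.2⟩
      exact local_factor hni tr htr

end Factorization

end RevAux

open RevWA in
theorem stmt19 (R : Type) [CommRing R] [Fintype R] (hR : (0 : R) ≠ 1)
    (α : Type) [Fintype α] [Nonempty α]
    (r : List α → R) (hrat : ∃ A : WA R α, A.series = r) :
    r ∈ Rev R α ↔ ∀ x : R, supp (fun w => r w + x) ∈ RevL R α := by
  classical
  constructor
  · rintro ⟨A, hrev, hser⟩ x
    obtain ⟨S, fS, θ, K, hK⟩ := RevAux.factor_all (Fintype.card R) R _ _ le_rfl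
      A.trans hrev
    haveI := fS
    have hmem := RevAux.factor_mem_rev (R := R) (α := α) S θ
      (fun τ => A.init ⬝ᵥ (K τ.1).mulVec A.final + x)
    refine ⟨_, hmem, ?_⟩
    have heq : (fun w : List α =>
        (fun τ : RevAux.PInj S => A.init ⬝ᵥ (K τ.1).mulVec A.final + x)
          ((w.map θ).prod)) = fun w => r w + x := by
      funext w
      dsimp only
      rw [← hK w]
      show A.init ⬝ᵥ (A.matWord w).mulVec A.final + x = r w + x
      rw [← hser]
      rfl
    rw [heq]
  · intro hyp
    have H : ∀ x : R, ∃ (S : Type) (_ : Fintype S) (θ : α → RevAux.PInj S)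
        (g : (S → Option S) → R),
        ∀ w : List α, (g (((w.map θ).prod).1) = 0 ↔ r w + x = 0) := by
      intro x
      obtain ⟨s, ⟨A, hrev, hser⟩, hsupp⟩ := hyp x
      obtain ⟨S, fS, θ, K, hK⟩ := RevAux.factor_all (Fintype.card R) R _ _ le_rfl
        A.trans hrev
      refine ⟨S, fS, θ, fun fn => A.init ⬝ᵥ (K fn).mulVec A.final, ?_⟩
      intro w
      show A.init ⬝ᵥ (K (((w.map θ).prod).1)).mulVec A.final = 0 ↔ r w + x = 0
      rw [← hK w]
      have h1 : A.init ⬝ᵥ ((w.map A.trans).prod).mulVec A.final = s w := by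
        rw [← hser]; rfl
      rw [h1]
      have h2 := Set.ext_iff.mp hsupp w
      simp only [supp, Set.mem_setOf_eq] at h2
      exact not_iff_not.mp h2
    choose S fS θ g hg using H
    haveI : ∀ x : R, Fintype (S x) := fS
    haveI : ∀ x : R, Fintype (Option (S x)) := fun x => by infer_instance
    haveI : Fintype (∀ x : R, Option (S x)) := Pi.instFintype
    let Θ : α → RevAux.PInj (∀ x : R, Option (S x)) :=
      fun a => RevAux.PInj.pi (fun x => RevAux.PInj.pad (θ x a))
    have hword : ∀ w : List α, (w.map Θ).prod
        = RevAux.PInj.pi (fun x => RevAux.PInj.pad ((w.map (θ x)).prod)) := by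
      intro w
      have h1 := RevAux.hom_list_prod RevAux.PInj.pi RevAux.PInj.pi_one
        RevAux.PInj.pi_mul (w.map (fun a => fun x => RevAux.PInj.pad (θ x a)))
      rw [List.map_map] at h1
      have h2 : (w.map Θ).prod
          = RevAux.PInj.pi ((w.map (fun a => fun x => RevAux.PInj.pad (θ x a))).prod) :=
        h1.symm
      rw [h2]
      congr 1
      funext x
      have h3 := Pi.list_prod_apply x (w.map (fun a => fun x => RevAux.PInj.pad (θ x a)))
      rw [List.map_map] at h3
      have h4 := RevAux.hom_list_prod RevAux.PInj.pad RevAux.PInj.pad_one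
        RevAux.PInj.pad_mul (w.map (θ x))
      rw [List.map_map] at h4
      rw [h3, h4]
      rfl
    have hmem := RevAux.factor_mem_rev (R := R) (α := α) (∀ x : R, Option (S x)) Θ
      (fun Τ => ∑ x : R, if g x (RevAux.PInj.extract x Τ.1) = 0 then -x else 0)
    have heq : (fun w : List α => ∑ x : R,
        if g x (RevAux.PInj.extract x ((w.map Θ).prod).1) = 0 then -x else 0) = r := by
      funext w
      have hex : ∀ x : R, RevAux.PInj.extract x ((w.map Θ).prod).1
          = ((w.map (θ x)).prod).1 := by
        intro x
        rw [hword w]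
        exact RevAux.PInj.extract_pi_pad (fun x => (w.map (θ x)).prod) x
      have hterm : ∀ x ∈ Finset.univ,
          (if g x (RevAux.PInj.extract x ((w.map Θ).prod).1) = 0 then -x else 0)
            = if x = -(r w) then -x else 0 := by
        intro x _
        rw [hex x]
        apply if_congr _ rfl rfl
        rw [hg x w]
        constructor
        · intro h
          exact eq_neg_of_add_eq_zero_left (by linear_combination h)
        · intro h
          rw [h]
          ring
      rw [Finset.sum_congr rfl hterm,
        Finset.sum_ite_eq' Finset.univ (-(r w)) (fun x => -x)]
      simp
    have hmem' := hmem
    rw [show (fun w : List α =>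
        (fun Τ : RevAux.PInj (∀ x : R, Option (S x)) => ∑ x : R,
          if g x (RevAux.PInj.extract x Τ.1) = 0 then -x else 0) ((w.map Θ).prod)) = r
      from heq] at hmem'
    exact hmem'
end RevAux
end
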